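/- arXiv:2001.04793 — 6 statements merged into one kernel-verified Lean document; each statement's English description precedes it below -/
import Mathlib

section
/- Let p,q ≥ 1, λ > 0, A > 0, and let A_1,…,A_{p−1} > 0, B_1,…,B_{q−1} > 0, a_1,…,a_{p−1} > 0, b_1,…,b_{q−1} > 0 satisfy ∑_{m=1}^{q−1} B_m − ∑_{l=1}^{p−1} A_l > −1. Then for every z ∈ ℂ and every real t with |t| < 1, ∑_{k=0}^∞ (t^k/k!) ∑_{n=0}^∞ [Γ(λ+k+nA) ∏_{l=1}^{p−1} Γ(a_l+nA_l)] / [Γ(λ+nA) ∏_{m=1}^{q−1} Γ(b_m+nB_m)] · z^n/n! = (1−t)^{−λ} · ∑_{n=0}^∞ [∏_{l=1}^{p−1} Γ(a_l+nA_l) / ∏_{m=1}^{q−1} Γ(b_m+nB_m)] · (z/(1−t)^A)^n / n!. -/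
open scoped BigOperators

open Real Filter MeasureTheory Topology Finset

lemma FW.Gamma_add_le_of_le_one {x s : ℝ} (hx : 0 < x) (hs0 : 0 < s) (hs1 : s ≤ 1) :
    Real.Gamma (x + s) ≤ Real.Gamma x * x ^ s := by
  have hΓx : 0 < Real.Gamma x := Real.Gamma_pos_of_pos hx
  have hΓxs : 0 < Real.Gamma (x + s) := Real.Gamma_pos_of_pos (by linarith)
  have hx1 : (0:ℝ) < x + 1 := by linarith
  have hmem : x ∈ Set.Ioi (0:ℝ) := hx
  have hmem1 : (x + 1) ∈ Set.Ioi (0:ℝ) := hx1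
  have hcomb : (1 - s) • x + s • (x + 1) = x + s := by simp [smul_eq_mul]; ring
  have h := Real.convexOn_log_Gamma.2 hmem hmem1 (by linarith : (0:ℝ) ≤ 1 - s)
    hs0.le (by ring)
  rw [hcomb] at h
  simp only [Function.comp] at h
  rw [Real.Gamma_add_one hx.ne'] at h
  rw [Real.log_mul hx.ne' hΓx.ne'] at h
  simp only [smul_eq_mul] at h
  have hlog : Real.log (Real.Gamma (x + s)) ≤ Real.log (Real.Gamma x) + s * Real.log x := by
    nlinarith
  have : Real.log (Real.Gamma x) + s * Real.log x = Real.log (Real.Gamma x * x ^ s) := by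
    rw [Real.log_mul hΓx.ne' (by positivity), Real.log_rpow hx]
  rw [this] at hlog
  exact (Real.log_le_log_iff hΓxs (by positivity)).mp hlog

lemma FW.Gamma_add_ge_of_le_one {x s : ℝ} (hx : 0 < x) (hs0 : 0 < s) (hs1 : s ≤ 1) :
    Real.Gamma x * x ≤ Real.Gamma (x + s) * (x + s) ^ (1 - s) := by
  have hΓx : 0 < Real.Gamma x := Real.Gamma_pos_of_pos hx
  have hxs : (0:ℝ) < x + s := by linarith
  have hΓxs : 0 < Real.Gamma (x + s) := Real.Gamma_pos_of_pos hxs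
  have hmem : (x + s) ∈ Set.Ioi (0:ℝ) := hxs
  have hmem1 : (x + s + 1) ∈ Set.Ioi (0:ℝ) := by simp; linarith
  have h := Real.convexOn_log_Gamma.2 hmem hmem1 hs0.le (by linarith : (0:ℝ) ≤ 1 - s)
    (by ring)
  have hcomb : s • (x + s) + (1 - s) • (x + s + 1) = x + 1 := by
    simp [smul_eq_mul]; ring
  rw [hcomb] at h
  simp only [Function.comp] at h
  rw [Real.Gamma_add_one hx.ne', Real.Gamma_add_one hxs.ne'] at h
  rw [Real.log_mul hx.ne' hΓx.ne', Real.log_mul hxs.ne' hΓxs.ne'] at h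
  simp only [smul_eq_mul] at h
  have hlog : Real.log (Real.Gamma x * x) ≤
      Real.log (Real.Gamma (x + s) * (x + s) ^ (1 - s)) := by
    rw [Real.log_mul hΓx.ne' hx.ne',
      Real.log_mul hΓxs.ne' (by positivity), Real.log_rpow hxs]
    nlinarith
  exact (Real.log_le_log_iff (by positivity) (by positivity)).mp hlog

lemma FW.Gamma_ratio_upper_aux (n : ℕ) : ∀ {A x : ℝ}, 0 < A → A ≤ n + 1 → 0 < x →
    Real.Gamma (x + A) ≤ Real.Gamma x * (x + A) ^ A := by
  induction n with
  | zero =>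
    intro A x hA hA1 hx
    calc Real.Gamma (x + A) ≤ Real.Gamma x * x ^ A :=
          FW.Gamma_add_le_of_le_one hx hA (by simpa using hA1)
      _ ≤ Real.Gamma x * (x + A) ^ A := by
          have h1 : 0 < Real.Gamma x := Real.Gamma_pos_of_pos hx
          have h2 : x ^ A ≤ (x + A) ^ A :=
            Real.rpow_le_rpow hx.le (by linarith) hA.le
          nlinarith
  | succ n ih =>
    intro A x hA hA1 hx
    by_cases hle : A ≤ n + 1
    · exact ih hA hle hx
    push_neg at hle
    have hA' : 0 < A - 1 := by
      have h0 : (0:ℝ) ≤ (n:ℝ) := Nat.cast_nonneg n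
      nlinarith
    have hA'1 : A - 1 ≤ n + 1 := by push_cast at hA1 ⊢; linarith
    have hxA' : (0:ℝ) < x + (A - 1) := by linarith
    have h1 : Real.Gamma (x + A) = (x + (A - 1)) * Real.Gamma (x + (A - 1)) := by
      rw [← Real.Gamma_add_one hxA'.ne']; ring_nf
    have h2 := ih hA' hA'1 hx
    have hΓx : 0 < Real.Gamma x := Real.Gamma_pos_of_pos hx
    have hxA : (0:ℝ) < x + A := by linarith
    calc Real.Gamma (x + A) = (x + (A - 1)) * Real.Gamma (x + (A - 1)) := h1
      _ ≤ (x + A) * (Real.Gamma x * (x + (A - 1)) ^ (A - 1)) := by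
          have hnn : 0 ≤ Real.Gamma (x + (A-1)) := (Real.Gamma_pos_of_pos hxA').le
          have := mul_le_mul_of_nonneg_left h2 hxA'.le
          nlinarith [Real.rpow_nonneg hxA'.le (A-1)]
      _ ≤ (x + A) * (Real.Gamma x * (x + A) ^ (A - 1)) := by
          have h3 : (x + (A-1)) ^ (A-1) ≤ (x + A) ^ (A-1) :=
            Real.rpow_le_rpow hxA'.le (by linarith) hA'.le
          exact mul_le_mul_of_nonneg_left (mul_le_mul_of_nonneg_left h3 hΓx.le) hxA.le
      _ = Real.Gamma x * (x + A) ^ A := by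
          have e : (x+A) ^ (A - 1) * (x + A) = (x+A) ^ A := by
            rw [← Real.rpow_add_one hxA.ne']; ring_nf
          calc (x + A) * (Real.Gamma x * (x + A) ^ (A - 1))
              = Real.Gamma x * ((x+A) ^ (A-1) * (x+A)) := by ring
            _ = Real.Gamma x * (x+A) ^ A := by rw [e]

lemma FW.Gamma_ratio_upper {A x : ℝ} (hA : 0 < A) (hx : 0 < x) :
    Real.Gamma (x + A) ≤ Real.Gamma x * (x + A) ^ A := by
  refine FW.Gamma_ratio_upper_aux (Nat.ceil A) hA ?_ hx
  have := Nat.le_ceil A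
  linarith

lemma FW.Gamma_ratio_lower_aux (n : ℕ) : ∀ {A x : ℝ}, 0 < A → A ≤ n + 1 → 0 < x →
    Real.Gamma x * x ^ (A + 1) / (x + A) ≤ Real.Gamma (x + A) := by
  induction n with
  | zero =>
    intro A x hA hA1 hx
    have hA1' : A ≤ 1 := by simpa using hA1
    have hxs : (0:ℝ) < x + A := by linarith
    have hΓx : 0 < Real.Gamma x := Real.Gamma_pos_of_pos hx
    have h := FW.Gamma_add_ge_of_le_one hx hA hA1'
    have h2 : Real.Gamma x * x * (x + A) ^ (A - 1) ≤ Real.Gamma (x + A) := by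
      rw [show A - 1 = -(1 - A) by ring, Real.rpow_neg hxs.le, ← div_eq_mul_inv,
        div_le_iff₀ (by positivity)]
      nlinarith [h]
    have key : Real.Gamma x * x ^ (A + 1) / (x + A) ≤ Real.Gamma x * x * (x + A) ^ (A - 1) := by
      rw [div_le_iff₀ hxs]
      have e1 : x ^ (A+1) = x * x ^ A := by
        rw [Real.rpow_add hx, Real.rpow_one]; ring
      have e2 : (x+A) ^ (A-1) * (x+A) = (x+A) ^ A := by
        rw [← Real.rpow_add_one hxs.ne']; ring_nf
      have h3 : x ^ A ≤ (x+A) ^ A := Real.rpow_le_rpow hx.le (by linarith) hA.le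
      calc Real.Gamma x * x ^ (A+1) = Real.Gamma x * x * x ^ A := by rw [e1]; ring
        _ ≤ Real.Gamma x * x * (x+A) ^ A :=
            mul_le_mul_of_nonneg_left h3 (by positivity)
        _ = Real.Gamma x * x * (x+A) ^ (A-1) * (x+A) := by rw [← e2]; ring
    exact key.trans h2
  | succ n ih =>
    intro A x hA hA1 hx
    by_cases hle : A ≤ n + 1
    · exact ih hA hle hx
    push_neg at hle
    have hA' : 0 < A - 1 := by
      have h0 : (0:ℝ) ≤ (n:ℝ) := Nat.cast_nonneg n
      nlinarith
    have hA'1 : A - 1 ≤ n + 1 := by push_cast at hA1 ⊢; linarith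
    have hxA' : (0:ℝ) < x + (A - 1) := by linarith
    have hxA : (0:ℝ) < x + A := by linarith
    have hΓx : 0 < Real.Gamma x := Real.Gamma_pos_of_pos hx
    have h1 : Real.Gamma (x + A) = (x + (A - 1)) * Real.Gamma (x + (A - 1)) := by
      rw [← Real.Gamma_add_one hxA'.ne']; ring_nf
    have h2 := ih hA' hA'1 hx
    have e : x ^ (A - 1 + 1) = x ^ A := by ring_nf
    calc Real.Gamma x * x ^ (A + 1) / (x + A) ≤ Real.Gamma x * x ^ A := by
          rw [div_le_iff₀ hxA, Real.rpow_add hx, Real.rpow_one]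
          have : 0 ≤ Real.Gamma x * x ^ A := by positivity
          nlinarith
      _ = (x + (A-1)) * (Real.Gamma x * x ^ (A - 1 + 1) / (x + (A-1))) := by
          rw [e]; field_simp
      _ ≤ (x + (A-1)) * Real.Gamma (x + (A-1)) := by
          have := mul_le_mul_of_nonneg_left h2 hxA'.le
          exact this
      _ = Real.Gamma (x + A) := h1.symm

lemma FW.Gamma_ratio_lower {A x : ℝ} (hA : 0 < A) (hx : 0 < x) :
    Real.Gamma x * x ^ (A + 1) / (x + A) ≤ Real.Gamma (x + A) := by
  refine FW.Gamma_ratio_lower_aux (Nat.ceil A) hA ?_ hx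
  have := Nat.le_ceil A
  linarith

lemma FW.summable_gamma_mul_pow {c u : ℝ} (hc : 0 < c) (hu : |u| < 1) :
    Summable (fun k : ℕ => Real.Gamma (c + k) * u ^ k / k.factorial) := by
  rcases eq_or_ne u 0 with rfl | hu0
  · apply summable_of_ne_finset_zero (s := {0})
    intro k hk
    have hk0 : k ≠ 0 := by simpa using hk
    simp [zero_pow hk0]
  refine summable_of_ratio_test_tendsto_lt_one hu ?_ ?_
  · filter_upwards with k
    have hck : (0:ℝ) < c + k := by positivity
    have hΓ : 0 < Real.Gamma (c + k) := Real.Gamma_pos_of_pos hck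
    have : (k.factorial : ℝ) ≠ 0 := by positivity
    positivity
  · have hrat : ∀ k : ℕ,
        ‖Real.Gamma (c + ↑(k+1)) * u ^ (k+1) / (k+1).factorial‖ /
        ‖Real.Gamma (c + ↑k) * u ^ k / k.factorial‖ = (c + k) / (k + 1) * |u| := by
      intro k
      have hck : (0:ℝ) < c + k := by positivity
      have hΓ : 0 < Real.Gamma (c + k) := Real.Gamma_pos_of_pos hck
      have hrec : Real.Gamma (c + ((k:ℝ)+1)) = (c + k) * Real.Gamma (c + k) := by
        rw [show c + ((k:ℝ)+1) = (c + k) + 1 by ring, Real.Gamma_add_one hck.ne']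
      have hfac : ((k+1).factorial : ℝ) = (k+1) * k.factorial := by
        push_cast [Nat.factorial_succ]; ring
      have hk1 : ((k:ℝ)+1) ≠ 0 := by positivity
      have hkf : (k.factorial : ℝ) ≠ 0 := by positivity
      push_cast
      rw [Real.norm_eq_abs, Real.norm_eq_abs, abs_div, abs_div, abs_mul, abs_mul,
        hrec]
      rw [abs_of_pos hΓ, abs_of_pos (mul_pos hck hΓ)]
      rw [abs_of_pos (by positivity : (0:ℝ) < (k.factorial:ℝ)),
        abs_of_pos (by positivity : (0:ℝ) < ((k+1).factorial:ℝ))]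
      rw [pow_succ, abs_mul, hfac]
      have hau : |u| ≠ 0 := abs_ne_zero.mpr hu0
      have haup : |u ^ k| = |u| ^ k := abs_pow u k
      rw [haup]
      field_simp
    have h2 : Tendsto (fun k : ℕ => (c + (k:ℝ)) / (k + 1) * |u|) atTop (𝓝 (1 * |u|)) := by
      refine Tendsto.mul_const _ ?_
      have h3 : Tendsto (fun k : ℕ => (c - 1) / ((k:ℝ) + 1) + 1) atTop (𝓝 (0 + 1)) := by
        refine Tendsto.add_const _ ?_
        have := (tendsto_const_div_atTop_nhds_zero_nat (c-1)).comp (tendsto_add_atTop_nat 1)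
        refine this.congr fun k => ?_
        simp [Function.comp]
      simp only [zero_add] at h3
      refine h3.congr fun k => ?_
      have : ((k:ℝ) + 1) ≠ 0 := by positivity
      field_simp
      ring
    rw [one_mul] at h2
    exact h2.congr fun k => (hrat k).symm

lemma FW.tsum_gamma_binomial {c t : ℝ} (hc : 0 < c) (ht : |t| < 1) :
    ∑' k : ℕ, Real.Gamma (c + k) * t ^ k / k.factorial
      = Real.Gamma c * (1 - t) ^ (-c : ℝ) := by
  obtain ⟨ht1, ht2⟩ := abs_lt.mp ht
  have h1t : (0:ℝ) < 1 - t := by linarith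
  set g : ℕ → ℝ → ℝ := fun k x => Real.exp (-x) * x ^ (c + k - 1) * (t ^ k / k.factorial)
    with hg
  -- each term is an integral
  have hint : ∀ k : ℕ, IntegrableOn (fun x => Real.exp (-x) * x ^ (c + k - 1)) (Set.Ioi 0) := by
    intro k
    exact Real.GammaIntegral_convergent (by positivity)
  have hgint : ∀ k : ℕ, IntegrableOn (g k) (Set.Ioi 0) := fun k => (hint k).mul_const _
  have hterm : ∀ k : ℕ, Real.Gamma (c + k) * t ^ k / k.factorial
      = ∫ x in Set.Ioi 0, g k x := by
    intro k
    rw [Real.Gamma_eq_integral (by positivity : (0:ℝ) < c + k)]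
    rw [hg]
    simp only []
    rw [MeasureTheory.integral_mul_const]
    ring
  -- norm integrals
  have hnorm : ∀ k : ℕ, ∫⁻ x in Set.Ioi 0, ‖g k x‖ₑ
      = ENNReal.ofReal (Real.Gamma (c + k) * |t| ^ k / k.factorial) := by
    intro k
    have hnn : 0 ≤ᵐ[volume.restrict (Set.Ioi 0)] fun x => ‖g k x‖ :=
      Filter.Eventually.of_forall fun x => norm_nonneg _
    have h1 : ENNReal.ofReal (∫ x in Set.Ioi 0, ‖g k x‖)
        = ∫⁻ x in Set.Ioi 0, ENNReal.ofReal ‖g k x‖ :=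
      ofReal_integral_eq_lintegral_ofReal (hgint k).norm hnn
    have h2 : (∫ x in Set.Ioi 0, ‖g k x‖) = Real.Gamma (c + k) * |t| ^ k / k.factorial := by
      have : ∀ x ∈ Set.Ioi (0:ℝ), ‖g k x‖ = Real.exp (-x) * x ^ (c + k - 1) * (|t| ^ k / k.factorial) := by
        intro x hx
        have hx0 : (0:ℝ) < x := hx
        rw [hg]
        simp only []
        rw [Real.norm_eq_abs, abs_mul, abs_mul, abs_of_pos (Real.exp_pos _),
          abs_of_pos (Real.rpow_pos_of_pos hx0 _), abs_div, abs_pow,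
          abs_of_pos (by positivity : (0:ℝ) < (k.factorial : ℝ))]
      rw [setIntegral_congr_fun measurableSet_Ioi this, MeasureTheory.integral_mul_const]
      rw [← Real.Gamma_eq_integral (by positivity : (0:ℝ) < c + k)]
      ring
    rw [h2] at h1
    simp_rw [ofReal_norm] at h1
    exact h1.symm
  -- swap sum and integral
  have habs : Summable (fun k : ℕ => Real.Gamma (c + k) * |t| ^ k / k.factorial) :=
    FW.summable_gamma_mul_pow hc (by rwa [abs_abs])
  have habs_nonneg : ∀ k : ℕ, 0 ≤ Real.Gamma (c + k) * |t| ^ k / k.factorial := by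
    intro k
    have := Real.Gamma_pos_of_pos (by positivity : (0:ℝ) < c + k)
    positivity
  have hswap : ∑' k : ℕ, ∫ x in Set.Ioi 0, g k x = ∫ x in Set.Ioi 0, ∑' k : ℕ, g k x := by
    refine (MeasureTheory.integral_tsum (fun k => (hgint k).1) ?_).symm
    rw [tsum_congr hnorm, ← ENNReal.ofReal_tsum_of_nonneg habs_nonneg habs]
    exact ENNReal.ofReal_ne_top
  -- pointwise sum
  have hpt : ∀ x ∈ Set.Ioi (0:ℝ), ∑' k : ℕ, g k x
      = x ^ (c - 1) * Real.exp (-((1 - t) * x)) := by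
    intro x hx
    have hx0 : (0:ℝ) < x := hx
    have hsplit : ∀ k : ℕ, g k x = Real.exp (-x) * x ^ (c - 1) * ((t * x) ^ k / k.factorial) := by
      intro k
      rw [hg]
      simp only []
      have : x ^ (c + (k:ℝ) - 1) = x ^ (c - 1) * x ^ (k : ℕ) := by
        rw [← Real.rpow_natCast x k, ← Real.rpow_add hx0]; ring_nf
      rw [this, mul_pow]
      ring
    rw [tsum_congr hsplit, tsum_mul_left]
    have hexp : ∑' k : ℕ, (t * x) ^ k / (k.factorial : ℝ) = Real.exp (t * x) := by
      rw [Real.exp_eq_exp_ℝ, NormedSpace.exp_eq_tsum_div]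
    rw [hexp]
    rw [show Real.exp (-x) * x ^ (c-1) * Real.exp (t * x)
        = x ^ (c-1) * (Real.exp (-x) * Real.exp (t*x)) by ring, ← Real.exp_add]
    congr 2
    ring
  have hfinal : ∫ x in Set.Ioi 0, ∑' k : ℕ, g k x
      = (1 / (1 - t)) ^ c * Real.Gamma c := by
    rw [setIntegral_congr_fun measurableSet_Ioi hpt]
    exact integral_rpow_mul_exp_neg_mul_Ioi hc h1t
  rw [tsum_congr hterm, hswap, hfinal, one_div, ← Real.rpow_neg_one (1-t),
    ← Real.rpow_mul h1t.le]
  rw [mul_comm]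
  norm_num

lemma FW.tendsto_affine_div (c C : ℝ) :
    Tendsto (fun n : ℕ => (c + n * C) / n) atTop (𝓝 C) := by
  have h : Tendsto (fun n : ℕ => c / n + C) atTop (𝓝 (0 + C)) :=
    (tendsto_const_div_atTop_nhds_zero_nat c).add_const C
  rw [zero_add] at h
  refine h.congr' ?_
  filter_upwards [eventually_ge_atTop 1] with n hn
  have hn' : ((n:ℝ)) ≠ 0 := by positivity
  field_simp

lemma FW.tendsto_affine_div' (c C : ℝ) :
    Tendsto (fun n : ℕ => (c + (n + 1) * C) / n) atTop (𝓝 C) := by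
  have h := FW.tendsto_affine_div (c + C) C
  refine h.congr' ?_
  filter_upwards [eventually_ge_atTop 1] with n hn
  have hn' : ((n:ℝ)) ≠ 0 := by positivity
  field_simp
  ring

lemma FW.tendsto_nat_div_succ : Tendsto (fun n : ℕ => (n : ℝ) / (n + 1)) atTop (𝓝 1) := by
  have h : Tendsto (fun n : ℕ => 1 - 1 / ((n:ℝ) + 1)) atTop (𝓝 (1 - 0)) := by
    refine Tendsto.const_sub _ ?_
    have := (tendsto_const_div_atTop_nhds_zero_nat (1:ℝ)).comp (tendsto_add_atTop_nat 1)
    refine this.congr fun n => ?_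
    simp [Function.comp]
  rw [sub_zero] at h
  refine h.congr fun n => ?_
  have : ((n:ℝ) + 1) ≠ 0 := by positivity
  field_simp
  ring

lemma FW.tendsto_ratio_bound (p' q' : ℕ) (a Aw : Fin p' → ℝ) (b Bw : Fin q' → ℝ)
    (ha : ∀ l, 0 < a l) (hAw : ∀ l, 0 < Aw l) (hb : ∀ m, 0 < b m) (hBw : ∀ m, 0 < Bw m)
    (hconv : (∑ m, Bw m) - (∑ l, Aw l) > -1) (s : ℝ) :
    Tendsto (fun n : ℕ =>
      (∏ l, (a l + (n + 1) * Aw l) ^ (Aw l)) *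
      (∏ m, (b m + (n + 1) * Bw m) / (b m + n * Bw m) ^ (Bw m + 1)) *
      (s / (n + 1))) atTop (𝓝 0) := by
  set σ : ℝ := (∑ l, Aw l) - (∑ m, Bw m) with hσ
  have hσ1 : σ - 1 < 0 := by simp only [hσ]; linarith
  -- factored form
  set Φ : ℕ → ℝ := fun n =>
      (∏ l, ((a l + (n + 1) * Aw l) / n) ^ (Aw l)) *
      (∏ m, ((b m + (n + 1) * Bw m) / n) * ((n / (b m + n * Bw m)) ^ (Bw m + 1))) *
      (s * ((n : ℝ) / (n + 1))) with hΦ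
  have hT1 : Tendsto (fun n : ℕ => ∏ l, ((a l + (n + 1) * Aw l) / n) ^ (Aw l)) atTop
      (𝓝 (∏ l, (Aw l) ^ (Aw l))) := by
    refine tendsto_finset_prod _ fun l _ => ?_
    exact (FW.tendsto_affine_div' (a l) (Aw l)).rpow_const (Or.inl (hAw l).ne')
  have hT2 : Tendsto (fun n : ℕ =>
      ∏ m, ((b m + (n + 1) * Bw m) / n) * ((n / (b m + n * Bw m)) ^ (Bw m + 1))) atTop
      (𝓝 (∏ m, Bw m * ((Bw m)⁻¹) ^ (Bw m + 1))) := by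
    refine tendsto_finset_prod _ fun m _ => ?_
    refine Tendsto.mul (FW.tendsto_affine_div' (b m) (Bw m)) ?_
    have h1 : Tendsto (fun n : ℕ => (n : ℝ) / (b m + n * Bw m)) atTop (𝓝 ((Bw m)⁻¹)) := by
      have := (FW.tendsto_affine_div (b m) (Bw m)).inv₀ (hBw m).ne'
      refine this.congr fun n => ?_
      rw [inv_div]
    exact h1.rpow_const (Or.inl (inv_ne_zero (hBw m).ne'))
  have hT3 : Tendsto (fun n : ℕ => s * ((n : ℝ) / (n + 1))) atTop (𝓝 (s * 1)) :=
    Tendsto.const_mul s FW.tendsto_nat_div_succ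
  have hTΦ : Tendsto Φ atTop (𝓝 ((∏ l, (Aw l) ^ (Aw l)) *
      (∏ m, Bw m * ((Bw m)⁻¹) ^ (Bw m + 1)) * (s * 1))) :=
    (hT1.mul hT2).mul hT3
  have hT4 : Tendsto (fun n : ℕ => ((n : ℝ)) ^ (σ - 1)) atTop (𝓝 0) := by
    have := (tendsto_rpow_neg_atTop (by linarith : 0 < 1 - σ)).comp
      (tendsto_natCast_atTop_atTop : Tendsto (fun n : ℕ => (n:ℝ)) atTop atTop)
    refine this.congr fun n => ?_
    simp only [Function.comp]
    rw [show -(1 - σ) = σ - 1 by ring]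
  have hprod : Tendsto (fun n : ℕ => Φ n * ((n:ℝ)) ^ (σ - 1)) atTop (𝓝 0) := by
    have := hTΦ.mul hT4
    rwa [mul_zero] at this
  refine hprod.congr' ?_
  filter_upwards [eventually_ge_atTop 1] with n hn
  have hN : (0:ℝ) < n := by exact_mod_cast hn
  -- identity
  have e1 : ∏ l, ((a l + (n + 1) * Aw l) / n) ^ (Aw l)
      = (∏ l, (a l + (n + 1) * Aw l) ^ (Aw l)) * ((n:ℝ)) ^ (-(∑ l, Aw l)) := by
    have : ∀ l ∈ Finset.univ (α := Fin p'), ((a l + (n + 1) * Aw l) / n) ^ (Aw l)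
        = (a l + (n + 1) * Aw l) ^ (Aw l) * ((n:ℝ)) ^ (-(Aw l)) := by
      intro l _
      have hx : (0:ℝ) ≤ a l + (n + 1) * Aw l := by
        have h1 := ha l; have h2 := hAw l
        have h3 : (0:ℝ) ≤ (n:ℝ) + 1 := by positivity
        nlinarith
      rw [Real.div_rpow hx hN.le, Real.rpow_neg hN.le, div_eq_mul_inv]
    rw [Finset.prod_congr rfl this, Finset.prod_mul_distrib,
      ← Real.rpow_sum_of_pos hN, ← Finset.sum_neg_distrib]
  have e2 : ∏ m, ((b m + (n + 1) * Bw m) / n) * ((n / (b m + n * Bw m)) ^ (Bw m + 1))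
      = (∏ m, (b m + (n + 1) * Bw m) / (b m + n * Bw m) ^ (Bw m + 1)) *
        ((n:ℝ)) ^ (∑ m, Bw m) := by
    have : ∀ m ∈ Finset.univ (α := Fin q'),
        ((b m + (n + 1) * Bw m) / n) * ((n / (b m + n * Bw m)) ^ (Bw m + 1))
        = ((b m + (n + 1) * Bw m) / (b m + n * Bw m) ^ (Bw m + 1)) * ((n:ℝ)) ^ (Bw m) := by
      intro m _
      have hy : (0:ℝ) < b m + n * Bw m := by
        have h1 := hb m; have h2 := hBw m
        have h3 : (0:ℝ) ≤ (n:ℝ) := by positivity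
        nlinarith
      rw [Real.div_rpow hN.le hy.le, Real.rpow_add_one hN.ne']
      field_simp
    rw [Finset.prod_congr rfl this, Finset.prod_mul_distrib, ← Real.rpow_sum_of_pos hN]
  rw [hΦ]
  simp only []
  rw [e1, e2]
  have ecol : ((n:ℝ)) ^ (-(∑ l, Aw l)) * ((n:ℝ)) ^ (∑ m, Bw m) * ((n:ℝ)) ^ (σ - 1) * (n:ℝ)
      = 1 := by
    rw [← Real.rpow_add hN, ← Real.rpow_add hN, ← Real.rpow_add_one hN.ne']
    rw [show -(∑ l, Aw l) + (∑ m, Bw m) + (σ - 1) + 1 = 0 by rw [hσ]; ring,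
      Real.rpow_zero]
  calc (∏ l, (a l + (↑n + 1) * Aw l) ^ Aw l) * ((n:ℝ)) ^ (-(∑ l, Aw l)) *
        ((∏ m, (b m + (↑n + 1) * Bw m) / (b m + ↑n * Bw m) ^ (Bw m + 1)) * ((n:ℝ)) ^ (∑ m, Bw m)) *
        (s * ((n:ℝ) / (↑n + 1))) * ((n:ℝ)) ^ (σ - 1)
      = (∏ l, (a l + (↑n + 1) * Aw l) ^ Aw l) *
        (∏ m, (b m + (↑n + 1) * Bw m) / (b m + ↑n * Bw m) ^ (Bw m + 1)) *
        (s / (↑n + 1)) *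
        (((n:ℝ)) ^ (-(∑ l, Aw l)) * ((n:ℝ)) ^ (∑ m, Bw m) * ((n:ℝ)) ^ (σ - 1) * (n:ℝ)) := by
        ring
    _ = (∏ l, (a l + (↑n + 1) * Aw l) ^ Aw l) *
        (∏ m, (b m + (↑n + 1) * Bw m) / (b m + ↑n * Bw m) ^ (Bw m + 1)) *
        (s / (↑n + 1)) := by rw [ecol, mul_one]

lemma FW.ratio_alg {P X Q Y s fn N1 : ℝ} (hQ : Q ≠ 0) (hY : Y ≠ 0) (hfn : fn ≠ 0)
    (hN1 : N1 ≠ 0) (n : ℕ) :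
    (P * X) / (Q * Y) * (s ^ (n+1) / (N1 * fn)) = P / Q * s ^ n / fn * (X * Y⁻¹ * (s / N1)) := by
  field_simp
  ring

set_option maxHeartbeats 1000000 in
lemma FW.summable_foxwright (p' q' : ℕ) (a Aw : Fin p' → ℝ) (b Bw : Fin q' → ℝ)
    (ha : ∀ l, 0 < a l) (hAw : ∀ l, 0 < Aw l) (hb : ∀ m, 0 < b m) (hBw : ∀ m, 0 < Bw m)
    (hconv : (∑ m, Bw m) - (∑ l, Aw l) > -1) (s : ℝ) (hs : 0 ≤ s) :
    Summable (fun n : ℕ => (∏ l, Real.Gamma (a l + n * Aw l)) /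
      (∏ m, Real.Gamma (b m + n * Bw m)) * s ^ n / n.factorial) := by
  have hxpos : ∀ (n : ℕ) (l : Fin p'), (0:ℝ) < a l + n * Aw l := by
    intro n l
    have h1 := ha l; have h2 := hAw l
    have h3 : (0:ℝ) ≤ (n:ℝ) := by positivity
    nlinarith
  have hypos : ∀ (n : ℕ) (m : Fin q'), (0:ℝ) < b m + n * Bw m := by
    intro n m
    have h1 := hb m; have h2 := hBw m
    have h3 : (0:ℝ) ≤ (n:ℝ) := by positivity
    nlinarith
  have hP : ∀ n : ℕ, (0:ℝ) < ∏ l, Real.Gamma (a l + n * Aw l) :=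
    fun n => Finset.prod_pos fun l _ => Real.Gamma_pos_of_pos (hxpos n l)
  have hQ : ∀ n : ℕ, (0:ℝ) < ∏ m, Real.Gamma (b m + n * Bw m) :=
    fun n => Finset.prod_pos fun m _ => Real.Gamma_pos_of_pos (hypos n m)
  rcases eq_or_lt_of_le hs with rfl | hs0
  · apply summable_of_ne_finset_zero (s := {0})
    intro n hn
    have hn0 : n ≠ 0 := by simpa using hn
    simp [zero_pow hn0]
  set U : ℕ → ℝ := fun n => (∏ l, Real.Gamma (a l + n * Aw l)) /
      (∏ m, Real.Gamma (b m + n * Bw m)) * s ^ n / n.factorial with hU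
  have hUpos : ∀ n, 0 < U n := by
    intro n
    have h1 := hP n; have h2 := hQ n
    have : (0:ℝ) < (n.factorial : ℝ) := by exact_mod_cast n.factorial_pos
    positivity
  set R : ℕ → ℝ := fun n =>
      (∏ l, (a l + (n + 1) * Aw l) ^ (Aw l)) *
      (∏ m, (b m + (n + 1) * Bw m) / (b m + n * Bw m) ^ (Bw m + 1)) *
      (s / (n + 1)) with hR
  have hratio : ∀ n : ℕ, U (n + 1) ≤ U n * R n := by
    intro n
    have hPbound : (∏ l, Real.Gamma (a l + (n+1 : ℕ) * Aw l)) ≤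
        (∏ l, Real.Gamma (a l + n * Aw l)) * ∏ l, (a l + ((n:ℝ) + 1) * Aw l) ^ (Aw l) := by
      rw [← Finset.prod_mul_distrib]
      refine Finset.prod_le_prod (fun l _ => (Real.Gamma_pos_of_pos (hxpos (n+1) l)).le)
        (fun l _ => ?_)
      have key := FW.Gamma_ratio_upper (hAw l) (hxpos n l)
      have e : a l + (n+1 : ℕ) * Aw l = (a l + n * Aw l) + Aw l := by push_cast; ring
      have e2 : (a l + n * Aw l) + Aw l = a l + ((n:ℝ)+1) * Aw l := by ring
      rw [e2] at key
      rw [e, e2]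
      exact key
    have hQbound : (∏ m, Real.Gamma (b m + n * Bw m)) *
        ∏ m, (b m + n * Bw m) ^ (Bw m + 1) / (b m + ((n:ℝ) + 1) * Bw m) ≤
        (∏ m, Real.Gamma (b m + (n+1 : ℕ) * Bw m)) := by
      rw [← Finset.prod_mul_distrib]
      refine Finset.prod_le_prod (fun m _ => ?_) (fun m _ => ?_)
      · have h1 := Real.Gamma_pos_of_pos (hypos n m)
        have h2 := hypos n m
        have h3 : (0:ℝ) < b m + ((n:ℝ)+1) * Bw m := by
          have := hypos (n+1) m; push_cast at this ⊢; linarith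
        positivity
      · have key := FW.Gamma_ratio_lower (hBw m) (hypos n m)
        have e : b m + (n+1 : ℕ) * Bw m = (b m + n * Bw m) + Bw m := by push_cast; ring
        have e2 : (b m + n * Bw m) + Bw m = b m + ((n:ℝ)+1) * Bw m := by ring
        rw [e, e2]
        rw [e2] at key
        calc Real.Gamma (b m + n * Bw m) *
              ((b m + n * Bw m) ^ (Bw m + 1) / (b m + ((n:ℝ)+1) * Bw m))
            = Real.Gamma (b m + n * Bw m) * (b m + n * Bw m) ^ (Bw m + 1) /
              (b m + ((n:ℝ)+1) * Bw m) := by ring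
          _ ≤ Real.Gamma (b m + ((n:ℝ)+1) * Bw m) := key
    -- combine
    have hQb_pos : 0 < (∏ m, Real.Gamma (b m + n * Bw m)) *
        ∏ m, (b m + n * Bw m) ^ (Bw m + 1) / (b m + ((n:ℝ) + 1) * Bw m) := by
      refine mul_pos (hQ n) (Finset.prod_pos fun m _ => ?_)
      have h2 := hypos n m
      have h3 : (0:ℝ) < b m + ((n:ℝ)+1) * Bw m := by
        have := hypos (n+1) m; push_cast at this ⊢; linarith
      positivity
    have hdiv : (∏ l, Real.Gamma (a l + (n+1 : ℕ) * Aw l)) /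
        (∏ m, Real.Gamma (b m + (n+1 : ℕ) * Bw m)) ≤
        ((∏ l, Real.Gamma (a l + n * Aw l)) * ∏ l, (a l + ((n:ℝ) + 1) * Aw l) ^ (Aw l)) /
        ((∏ m, Real.Gamma (b m + n * Bw m)) *
          ∏ m, (b m + n * Bw m) ^ (Bw m + 1) / (b m + ((n:ℝ) + 1) * Bw m)) := by
      refine div_le_div₀ ?_ hPbound hQb_pos hQbound
      refine mul_nonneg (hP n).le (Finset.prod_nonneg fun l _ => Real.rpow_nonneg ?_ _)
      have := hxpos (n+1) l; push_cast at this; linarith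
    have hnn : (0:ℝ) ≤ s^(n+1)/(((n+1).factorial : ℕ) : ℝ) := by positivity
    have step1 : U (n+1) ≤
        (((∏ l, Real.Gamma (a l + n * Aw l)) * ∏ l, (a l + ((n:ℝ) + 1) * Aw l) ^ (Aw l)) /
        ((∏ m, Real.Gamma (b m + n * Bw m)) *
          ∏ m, (b m + n * Bw m) ^ (Bw m + 1) / (b m + ((n:ℝ) + 1) * Bw m))) *
        (s^(n+1)/(((n+1).factorial : ℕ) : ℝ)) := by
      calc U (n+1) = ((∏ l, Real.Gamma (a l + (n+1:ℕ) * Aw l)) /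
            (∏ m, Real.Gamma (b m + (n+1:ℕ) * Bw m))) * (s^(n+1)/(((n+1).factorial : ℕ) : ℝ)) := by
            simp only [hU]; ring
        _ ≤ _ := mul_le_mul_of_nonneg_right hdiv hnn
    refine step1.trans (le_of_eq ?_)
    simp only [hU, hR]
    have hfac : (((n+1).factorial : ℕ) : ℝ) = ((n:ℝ)+1) * (n.factorial : ℝ) := by
      push_cast [Nat.factorial_succ]; ring
    have hYpos : (0:ℝ) < ∏ m, (b m + n * Bw m) ^ (Bw m + 1) / (b m + ((n:ℝ) + 1) * Bw m) := by
      refine Finset.prod_pos fun m _ => ?_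
      have h2 := hypos n m
      have h3 : (0:ℝ) < b m + ((n:ℝ)+1) * Bw m := by
        have := hypos (n+1) m; push_cast at this ⊢; linarith
      positivity
    have hYinv : (∏ m, (b m + ((n:ℝ)+1) * Bw m) / (b m + (n:ℝ) * Bw m) ^ (Bw m + 1)) =
        (∏ m, (b m + n * Bw m) ^ (Bw m + 1) / (b m + ((n:ℝ) + 1) * Bw m))⁻¹ := by
      rw [← Finset.prod_inv_distrib]
      exact Finset.prod_congr rfl fun m _ => (inv_div _ _).symm
    rw [hYinv, hfac]
    have hfn : ((n.factorial : ℕ) : ℝ) ≠ 0 := by positivity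
    have hn1 : ((n:ℝ) + 1) ≠ 0 := by positivity
    exact FW.ratio_alg (hQ n).ne' hYpos.ne' hfn hn1 n
  have htend := FW.tendsto_ratio_bound p' q' a Aw b Bw ha hAw hb hBw hconv s
  have hev : ∀ᶠ n in atTop, R n ≤ 1/2 := htend.eventually_le_const (by norm_num)
  refine summable_of_ratio_norm_eventually_le (r := 1/2) (by norm_num) ?_
  filter_upwards [hev] with n hn
  have h1 := hUpos (n+1)
  have h2 := hUpos n
  rw [Real.norm_eq_abs, Real.norm_eq_abs, abs_of_pos h1, abs_of_pos h2]
  calc U (n+1) ≤ U n * R n := hratio n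
    _ ≤ U n * (1/2) := mul_le_mul_of_nonneg_left hn h2.le
    _ = 1/2 * U n := by ring

set_option maxHeartbeats 1000000 in
/-- Generating function for the Fox–Wright function:
`∑_k pΨq[(λ+k,A),(a,A_l);(λ,A),(b,B_m) | z] t^k/k!
  = (1-t)^{-λ} (p-1)Ψ(q-1)[(a,A_l);(b,B_m) | z/(1-t)^A]`, written as explicit series. -/
theorem foxWright_generating_function
    (p q : ℕ) (hp : 1 ≤ p) (hq : 1 ≤ q)
    (lam A : ℝ) (hlam : 0 < lam) (hA : 0 < A)
    (a Aw : Fin (p - 1) → ℝ) (b Bw : Fin (q - 1) → ℝ)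
    (ha : ∀ l, 0 < a l) (hAw : ∀ l, 0 < Aw l)
    (hb : ∀ m, 0 < b m) (hBw : ∀ m, 0 < Bw m)
    (hconv : (∑ m, Bw m) - (∑ l, Aw l) > -1)
    (z : ℂ) (t : ℝ) (ht : |t| < 1) :
    ∑' k : ℕ, ((t ^ k / k.factorial : ℝ) : ℂ) *
      ∑' n : ℕ, (((Real.Gamma (lam + k + n * A) * ∏ l, Real.Gamma (a l + n * Aw l)) /
          (Real.Gamma (lam + n * A) * ∏ m, Real.Gamma (b m + n * Bw m)) : ℝ) : ℂ) *
        z ^ n / (n.factorial : ℂ)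
    = (((1 - t) ^ (-lam) : ℝ) : ℂ) *
      ∑' n : ℕ, (((∏ l, Real.Gamma (a l + n * Aw l)) /
          (∏ m, Real.Gamma (b m + n * Bw m)) : ℝ) : ℂ) *
        (z / (((1 - t) ^ A : ℝ) : ℂ)) ^ n / (n.factorial : ℂ) := by
  obtain ⟨ht1, ht2⟩ := abs_lt.mp ht
  have h1t : (0:ℝ) < 1 - t := by linarith
  have hs1 : |t| < 1 := ht
  have h1s : (0:ℝ) < 1 - |t| := by linarith [abs_nonneg t]
  -- notation
  set P : ℕ → ℝ := fun n => ∏ l, Real.Gamma (a l + n * Aw l) with hPdef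
  set Q : ℕ → ℝ := fun n => ∏ m, Real.Gamma (b m + n * Bw m) with hQdef
  have hcpos : ∀ n : ℕ, (0:ℝ) < lam + n * A := by
    intro n
    have : (0:ℝ) ≤ (n:ℝ) := by positivity
    nlinarith
  have hPpos : ∀ n, 0 < P n := by
    intro n
    refine Finset.prod_pos fun l _ => Real.Gamma_pos_of_pos ?_
    have h1 := ha l; have h2 := hAw l
    have : (0:ℝ) ≤ (n:ℝ) := by positivity
    nlinarith
  have hQpos : ∀ n, 0 < Q n := by
    intro n
    refine Finset.prod_pos fun m _ => Real.Gamma_pos_of_pos ?_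
    have h1 := hb m; have h2 := hBw m
    have : (0:ℝ) ≤ (n:ℝ) := by positivity
    nlinarith
  have hΓc : ∀ n : ℕ, (0:ℝ) < Real.Gamma (lam + n * A) :=
    fun n => Real.Gamma_pos_of_pos (hcpos n)
  set f : ℕ → ℕ → ℂ := fun k n => ((t ^ k / k.factorial : ℝ) : ℂ) *
      (((Real.Gamma (lam + k + n * A) * P n) / (Real.Gamma (lam + n * A) * Q n) : ℝ) : ℂ) *
        z ^ n / (n.factorial : ℂ) with hfdef
  -- norm of f
  set W : ℕ → ℕ → ℝ := fun n k => (Real.Gamma ((lam + n * A) + k) * |t| ^ k / k.factorial) *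
      ((P n / (Real.Gamma (lam + n * A) * Q n)) * ‖z‖ ^ n / n.factorial) with hWdef
  have hWeq : ∀ n k, ‖f k n‖ = W n k := by
    intro n k
    rw [hfdef, hWdef]
    simp only []
    rw [show lam + (k:ℝ) + n * A = (lam + n * A) + k by ring]
    rw [norm_div, norm_mul, norm_mul, Complex.norm_real, Complex.norm_real, norm_pow]
    rw [Real.norm_eq_abs, Real.norm_eq_abs]
    have e1 : |t ^ k / (k.factorial : ℝ)| = |t| ^ k / k.factorial := by
      rw [abs_div, abs_pow, abs_of_pos (by positivity : (0:ℝ) < (k.factorial:ℝ))]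
    have e2 : |(Real.Gamma ((lam + n * A) + k) * P n) / (Real.Gamma (lam + n * A) * Q n)| =
        (Real.Gamma ((lam + n * A) + k) * P n) / (Real.Gamma (lam + n * A) * Q n) := by
      refine abs_of_pos ?_
      have hg := Real.Gamma_pos_of_pos (by positivity : (0:ℝ) < (lam + n*A) + k)
      have := hPpos n; have := hQpos n; have := hΓc n
      positivity
    rw [e1, e2]
    have e3 : ‖(n.factorial : ℂ)‖ = (n.factorial : ℝ) := by
      rw [show ((n.factorial : ℕ) : ℂ) = (((n.factorial : ℕ) : ℝ) : ℂ) by push_cast; rfl,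
        Complex.norm_real, Real.norm_eq_abs,
        abs_of_pos (by positivity : (0:ℝ) < ((n.factorial : ℕ):ℝ))]
    rw [e3]
    have h1 := (hΓc n).ne'
    have h2 := (hQpos n).ne'
    field_simp
  -- row summability in k
  have hrowW : ∀ n, Summable (fun k => W n k) := by
    intro n
    exact (FW.summable_gamma_mul_pow (hcpos n) (by rwa [abs_abs])).mul_right _
  -- row sums
  set r : ℝ := ‖z‖ * (1 - |t|) ^ (-A : ℝ) with hrdef
  have hr0 : 0 ≤ r := by
    have := Real.rpow_nonneg h1s.le (-A)
    have := norm_nonneg z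
    positivity
  have hrowsum : ∀ n, ∑' k, W n k =
      (1 - |t|) ^ (-lam : ℝ) * (P n / Q n * r ^ n / n.factorial) := by
    intro n
    rw [hWdef]
    simp only []
    rw [tsum_mul_right, FW.tsum_gamma_binomial (hcpos n) (by rwa [abs_abs])]
    have e1 : (1 - |t|) ^ (-(lam + n * A) : ℝ)
        = (1 - |t|) ^ (-lam : ℝ) * ((1 - |t|) ^ (-A : ℝ)) ^ n := by
      rw [← Real.rpow_natCast ((1 - |t|) ^ (-A:ℝ)) n, ← Real.rpow_mul h1s.le,
        ← Real.rpow_add h1s]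
      congr 1
      ring
    rw [e1, hrdef]
    have h1 := (hΓc n).ne'
    have h2 := (hQpos n).ne'
    rw [mul_pow]
    field_simp
  have hsumV : Summable (fun n => (1 - |t|) ^ (-lam : ℝ) * (P n / Q n * r ^ n / n.factorial)) := by
    exact (FW.summable_foxwright _ _ a Aw b Bw ha hAw hb hBw hconv r hr0).mul_left _
  -- full norm summability
  have hG : Summable (fun pr : ℕ × ℕ => W pr.1 pr.2) := by
    rw [summable_prod_of_nonneg]
    · constructor
      · exact fun n => hrowW n
      · refine hsumV.congr fun n => ?_
        rw [hrowsum n]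
    · intro pr
      have := hWeq pr.1 pr.2
      calc (0:ℝ) ≤ ‖f pr.2 pr.1‖ := norm_nonneg _
        _ = W pr.1 pr.2 := hWeq pr.1 pr.2
  have hF : Summable (Function.uncurry f) := by
    refine Summable.of_norm ?_
    have := hG.prod_symm
    refine this.congr fun pr => ?_
    simp only [Function.comp_def, Prod.fst_swap, Prod.snd_swap]
    exact (hWeq pr.2 pr.1).symm
  -- per-n complex row sums
  have hQCne : ∀ n : ℕ, ((Q n : ℝ) : ℂ) ≠ 0 := fun n => by
    exact_mod_cast (hQpos n).ne'
  have hΓCne : ∀ n : ℕ, ((Real.Gamma (lam + n * A) : ℝ) : ℂ) ≠ 0 := fun n => by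
    exact_mod_cast (hΓc n).ne'
  have hwne : (((1 - t) ^ (A : ℝ) : ℝ) : ℂ) ≠ 0 := by
    exact_mod_cast (Real.rpow_pos_of_pos h1t A).ne'
  have hrowC : ∀ n : ℕ, ∑' k, f k n =
      (((1 - t) ^ (-lam : ℝ) : ℝ) : ℂ) * (((P n / Q n : ℝ) : ℂ) *
        (z / (((1 - t) ^ (A : ℝ) : ℝ) : ℂ)) ^ n / (n.factorial : ℂ)) := by
    intro n
    have hterm : ∀ k : ℕ, f k n =
        ((Real.Gamma ((lam + n * A) + k) * t ^ k / k.factorial : ℝ) : ℂ) *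
          (((P n / (Real.Gamma (lam + n * A) * Q n)) : ℝ) : ℂ) * z ^ n / (n.factorial : ℂ) := by
      intro k
      rw [hfdef]
      simp only []
      rw [show lam + (k:ℝ) + n * A = (lam + n * A) + k by ring]
      push_cast
      ring
    rw [tsum_congr hterm]
    have hterm2 : ∀ k : ℕ,
        ((Real.Gamma ((lam + n * A) + k) * t ^ k / k.factorial : ℝ) : ℂ) *
          (((P n / (Real.Gamma (lam + n * A) * Q n)) : ℝ) : ℂ) * z ^ n / (n.factorial : ℂ)
        = ((Real.Gamma ((lam + n * A) + k) * t ^ k / k.factorial : ℝ) : ℂ) *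
          ((((P n / (Real.Gamma (lam + n * A) * Q n)) : ℝ) : ℂ) * z ^ n / (n.factorial : ℂ)) := by
      intro k; ring
    rw [tsum_congr hterm2, tsum_mul_right, ← Complex.ofReal_tsum,
      FW.tsum_gamma_binomial (hcpos n) ht]
    have e1 : (1 - t) ^ (-(lam + (n:ℝ) * A) : ℝ)
        = (1 - t) ^ (-lam : ℝ) * (((1 - t) ^ (A : ℝ))⁻¹) ^ n := by
      rw [← Real.rpow_neg h1t.le A, ← Real.rpow_natCast ((1 - t) ^ (-A:ℝ)) n,
        ← Real.rpow_mul h1t.le, ← Real.rpow_add h1t]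
      congr 1
      ring
    rw [e1, div_pow]
    have hfacne : ((n.factorial : ℕ) : ℂ) ≠ 0 :=
      Nat.cast_ne_zero.mpr n.factorial_ne_zero
    push_cast
    have hw' : (((1 - t) ^ (A : ℝ) : ℝ) : ℂ) ^ n * ((((1 - t) ^ (A : ℝ) : ℝ) : ℂ))⁻¹ ^ n = 1 := by
      rw [← mul_pow, mul_inv_cancel₀ hwne, one_pow]
    field_simp [hΓCne n, hQCne n, hwne, hfacne]
    linear_combination ((((1 - t) ^ (-lam : ℝ) : ℝ) : ℂ) * ((P n : ℝ) : ℂ) * z ^ n) * hw'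
  -- assemble
  calc ∑' k : ℕ, ((t ^ k / k.factorial : ℝ) : ℂ) *
      ∑' n : ℕ, (((Real.Gamma (lam + k + n * A) * P n) /
          (Real.Gamma (lam + n * A) * Q n) : ℝ) : ℂ) * z ^ n / (n.factorial : ℂ)
      = ∑' k : ℕ, ∑' n : ℕ, f k n := by
        refine tsum_congr fun k => ?_
        rw [← tsum_mul_left]
        refine tsum_congr fun n => ?_
        rw [hfdef]
        simp only []
        ring
    _ = ∑' n : ℕ, ∑' k : ℕ, f k n := (Summable.tsum_comm hF).symm
    _ = ∑' n : ℕ, (((1 - t) ^ (-lam : ℝ) : ℝ) : ℂ) * (((P n / Q n : ℝ) : ℂ) *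
        (z / (((1 - t) ^ (A : ℝ) : ℝ) : ℂ)) ^ n / (n.factorial : ℂ)) := tsum_congr hrowC
    _ = (((1 - t) ^ (-lam : ℝ) : ℝ) : ℂ) * ∑' n : ℕ, (((P n / Q n : ℝ) : ℂ) *
        (z / (((1 - t) ^ (A : ℝ) : ℝ) : ℂ)) ^ n / (n.factorial : ℂ)) := tsum_mul_left
end

section
/- Let λ > 0 and A > 0. Then for every z ∈ ℂ and every real t with |t| < 1, ∑_{k=0}^∞ (t^k/k!) ∑_{n=0}^∞ [Γ(λ+k+nA)/Γ(λ+nA)] · z^n/n! = (1−t)^{−λ} · exp(z/(1−t)^A). -/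
open MeasureTheory Real Set Filter
open scoped Topology

lemma aux_integral {r : ℝ} (hr : 0 < r) (s : ℝ) (k : ℕ) :
    ∫ x in Ioi (0:ℝ), (Real.exp (-x) * x ^ (r - 1)) * ((s * x) ^ k / k.factorial)
      = Real.Gamma (r + k) * s ^ k / k.factorial := by
  have h1 : ∀ x ∈ Ioi (0:ℝ), (Real.exp (-x) * x ^ (r - 1)) * ((s * x) ^ k / k.factorial)
      = (s ^ k / k.factorial) * (Real.exp (-x) * x ^ (r + k - 1)) := by
    intro x hx
    have hx0 : (0:ℝ) < x := hx
    rw [show r + (k:ℝ) - 1 = (r - 1) + (k:ℝ) by ring, Real.rpow_add hx0, Real.rpow_natCast,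
      mul_pow]
    ring
  rw [setIntegral_congr_fun measurableSet_Ioi h1, integral_const_mul,
    ← Real.Gamma_eq_integral (by positivity : (0:ℝ) < r + k)]
  ring

lemma aux_summable {r t : ℝ} (hr : 0 < r) (ht : |t| < 1) :
    Summable (fun k : ℕ => Real.Gamma (r + k) * t ^ k / k.factorial) := by
  rcases eq_or_ne t 0 with rfl | ht0
  · apply summable_of_ne_finset_zero (s := {0})
    intro k hk
    simp only [Finset.mem_singleton] at hk
    simp [zero_pow hk]
  · have hne : ∀ k : ℕ, Real.Gamma (r + k) * t ^ k / k.factorial ≠ 0 := fun k =>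
      div_ne_zero (mul_ne_zero (Real.Gamma_pos_of_pos (by positivity)).ne' (pow_ne_zero _ ht0))
        (Nat.cast_ne_zero.mpr k.factorial_ne_zero)
    refine summable_of_ratio_test_tendsto_lt_one ht (Eventually.of_forall hne) ?_
    have heq : ∀ k : ℕ, ‖Real.Gamma (r + ((k+1 : ℕ) : ℝ)) * t ^ (k+1) / ((k+1 : ℕ).factorial : ℝ)‖
        / ‖Real.Gamma (r + k) * t ^ k / k.factorial‖ = (1 + (r-1) * (1/((k:ℝ)+1))) * |t| := by
      intro k
      have hg : 0 < Real.Gamma (r + k) := Real.Gamma_pos_of_pos (by positivity)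
      have hfac : (0:ℝ) < k.factorial := by exact_mod_cast k.factorial_pos
      have hk1 : (0:ℝ) < (k:ℝ) + 1 := by positivity
      have hG1 : Real.Gamma (r + ((k+1 : ℕ) : ℝ)) = (r + k) * Real.Gamma (r + k) := by
        push_cast
        rw [show r + ((k:ℝ)+1) = (r + k) + 1 by ring, Real.Gamma_add_one (by positivity)]
      rw [hG1, Nat.factorial_succ]
      push_cast
      simp only [Real.norm_eq_abs, abs_div, abs_mul, abs_pow, Nat.abs_cast,
        abs_of_pos hg, abs_of_pos (show (0:ℝ) < r + k by positivity), abs_of_pos hk1,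
        abs_of_pos hfac]
      rcases eq_or_lt_of_le (abs_nonneg t) with h0 | h0
      · exfalso; exact ht0 (abs_eq_zero.mp h0.symm)
      field_simp
      ring
    rw [funext heq]
    have h0 : Tendsto (fun k : ℕ => (1 + (r-1) * (1/((k:ℝ)+1))) * |t|) atTop
        (𝓝 ((1 + (r-1) * 0) * |t|)) :=
      (tendsto_const_nhds.add ((tendsto_one_div_add_atTop_nhds_zero_nat).const_mul (r-1))).mul
        tendsto_const_nhds
    simpa using h0

lemma aux_hasSum {r t : ℝ} (hr : 0 < r) (ht : |t| < 1) :
    HasSum (fun k : ℕ => Real.Gamma (r + k) / Real.Gamma r * t ^ k / k.factorial)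
      ((1 - t) ^ (-r)) := by
  have ht1 : 0 < 1 - t := by have := abs_lt.1 ht; linarith
  have hΓ : 0 < Real.Gamma r := Real.Gamma_pos_of_pos hr
  set F : ℕ → ℝ → ℝ := fun k x => (Real.exp (-x) * x ^ (r - 1)) * ((t * x) ^ k / k.factorial)
    with hF
  have hF_int : ∀ k, IntegrableOn (F k) (Ioi (0:ℝ)) := by
    intro k
    have h : IntegrableOn (fun x : ℝ => (t ^ k / (k.factorial : ℝ)) * (Real.exp (-x) * x ^ (r + k - 1))) (Ioi (0:ℝ)) :=
      (Real.GammaIntegral_convergent (show (0:ℝ) < r + k by positivity)).const_mul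
        (t ^ k / (k.factorial : ℝ))
    apply h.congr_fun ?_ measurableSet_Ioi
    intro x hx
    have hx0 : (0:ℝ) < x := hx
    simp only [hF]
    rw [show r + (k:ℝ) - 1 = (r - 1) + (k:ℝ) by ring, Real.rpow_add hx0, Real.rpow_natCast,
      mul_pow]
    ring
  have hnorm : ∀ k, ∫ x in Ioi (0:ℝ), ‖F k x‖
      = Real.Gamma (r + k) * |t| ^ k / k.factorial := by
    intro k
    rw [← aux_integral hr |t| k]
    apply setIntegral_congr_fun measurableSet_Ioi
    intro x hx
    have hx0 : (0:ℝ) < x := hx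
    simp only [hF, Real.norm_eq_abs, abs_mul, abs_div, abs_pow, Nat.abs_cast,
      abs_of_pos (Real.exp_pos (-x)), abs_of_pos (Real.rpow_pos_of_pos hx0 (r-1)),
      abs_of_pos hx0, mul_pow]
  have hsum : Summable fun k => ∫ x in Ioi (0:ℝ), ‖F k x‖ := by
    rw [funext hnorm]
    exact aux_summable hr (by rwa [abs_abs])
  have H := MeasureTheory.hasSum_integral_of_summable_integral_norm hF_int hsum
  have h3 : ∫ x in Ioi (0:ℝ), ∑' k, F k x = (1/(1-t)) ^ r * Real.Gamma r := by
    rw [← Real.integral_rpow_mul_exp_neg_mul_Ioi hr ht1]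
    apply setIntegral_congr_fun measurableSet_Ioi
    intro x hx
    have hx0 : (0:ℝ) < x := hx
    have hs : HasSum (fun k : ℕ => (t*x)^k / (k.factorial:ℝ)) (Real.exp (t*x)) := by
      rw [Real.exp_eq_exp_ℝ]; exact NormedSpace.expSeries_div_hasSum_exp (t*x)
    calc ∑' k, F k x = (Real.exp (-x) * x ^ (r-1)) * Real.exp (t*x) :=
          (hs.mul_left _).tsum_eq
      _ = x ^ (r-1) * Real.exp (-((1-t)*x)) := by
          rw [mul_comm (Real.exp (-x)), mul_assoc, ← Real.exp_add,
            show -x + t*x = -((1-t)*x) by ring]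
  have H' : HasSum (fun k : ℕ => Real.Gamma (r + k) * t ^ k / k.factorial)
      ((1/(1-t)) ^ r * Real.Gamma r) := by
    rw [← h3, ← funext (fun k => aux_integral hr t k)]
    exact H
  have H2 := H'.div_const (Real.Gamma r)
  have hval : (1/(1-t)) ^ r * Real.Gamma r / Real.Gamma r = (1-t) ^ (-r) := by
    rw [mul_div_assoc, div_self hΓ.ne', mul_one, one_div, Real.inv_rpow ht1.le,
      ← Real.rpow_neg ht1.le]
  have hfun : (fun k : ℕ => Real.Gamma (r + k) / Real.Gamma r * t ^ k / k.factorial)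
      = fun k : ℕ => Real.Gamma (r + k) * t ^ k / k.factorial / Real.Gamma r := by
    funext k; ring
  rw [hfun, ← hval]
  exact H2

lemma aux_rpow {u lam A : ℝ} (hu : 0 < u) (n : ℕ) :
    u ^ (-(lam + n * A)) = u ^ (-lam) * (u ^ (-A)) ^ n := by
  rw [show -(lam + (n:ℝ) * A) = -lam + -A * (n:ℝ) by ring, Real.rpow_add hu,
    Real.rpow_mul hu.le, Real.rpow_natCast]

/-- `∑_k 1Ψ1[(λ+k,A);(λ,A) | z] t^k/k! = (1-t)^{-λ} exp(z/(1-t)^A)`, written as explicit series. -/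
theorem foxWright_generating_function_one_one
    (lam A : ℝ) (hlam : 0 < lam) (hA : 0 < A)
    (z : ℂ) (t : ℝ) (ht : |t| < 1) :
    ∑' k : ℕ, ((t ^ k / k.factorial : ℝ) : ℂ) *
      ∑' n : ℕ, ((Real.Gamma (lam + k + n * A) / Real.Gamma (lam + n * A) : ℝ) : ℂ) *
        z ^ n / (n.factorial : ℂ)
    = (((1 - t) ^ (-lam) : ℝ) : ℂ) * Complex.exp (z / (((1 - t) ^ A : ℝ) : ℂ)) := by
  have ht1 : 0 < 1 - t := by have := abs_lt.1 ht; linarith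
  have habs : |(|t|)| < 1 := by rwa [abs_abs]
  have h1t : 0 < 1 - |t| := by linarith
  set f : ℕ → ℕ → ℂ := fun k n => ((t ^ k / k.factorial : ℝ) : ℂ) *
      ((Real.Gamma (lam + k + n * A) / Real.Gamma (lam + n * A) : ℝ) : ℂ) *
        z ^ n / (n.factorial : ℂ) with hf
  have hrn : ∀ n : ℕ, 0 < lam + n * A := fun n => by positivity
  have harg : ∀ k n : ℕ, lam + (k:ℝ) + (n:ℝ) * A = lam + (n:ℝ) * A + (k:ℝ) := fun k n => by ring
  -- norm computation
  have hnorm : ∀ k n : ℕ, ‖f k n‖ =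
      Real.Gamma (lam + n * A + k) / Real.Gamma (lam + n * A) * |t| ^ k / k.factorial
        * (‖z‖ ^ n / n.factorial) := by
    intro k n
    have hg1 : 0 < Real.Gamma (lam + n*A + k) := Real.Gamma_pos_of_pos (by positivity)
    have hg2 : 0 < Real.Gamma (lam + n*A) := Real.Gamma_pos_of_pos (hrn n)
    simp only [hf, harg]
    rw [norm_div, norm_mul, norm_mul, Complex.norm_real, Complex.norm_real, norm_pow,
      Complex.norm_natCast, Real.norm_eq_abs, Real.norm_eq_abs,
      abs_of_pos (div_pos hg1 hg2), abs_div, abs_pow, Nat.abs_cast]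
    ring
  -- per-n hasSum of norms over k
  have hG : ∀ n : ℕ, HasSum (fun k => ‖f k n‖)
      ((1-|t|) ^ (-(lam + n*A)) * (‖z‖^n / n.factorial)) := by
    intro n
    simp only [hnorm]
    exact (aux_hasSum (hrn n) habs).mul_right _
  -- summability of column sums
  have hS : Summable (fun n : ℕ => (1-|t|) ^ (-(lam + (n:ℝ) * A)) * (‖z‖^n / n.factorial)) := by
    have hw : HasSum (fun n : ℕ => (‖z‖ * (1-|t|) ^ (-A))^n / n.factorial)
        (NormedSpace.exp (‖z‖ * (1-|t|) ^ (-A))) := NormedSpace.expSeries_div_hasSum_exp _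
    refine ((hw.mul_left ((1-|t|) ^ (-lam))).summable).congr fun n => ?_
    rw [aux_rpow h1t, mul_pow]
    ring
  -- summability over the product
  have hsum_norm : Summable (fun p : ℕ × ℕ => ‖f p.1 p.2‖) := by
    have hsw : Summable (fun p : ℕ × ℕ => ‖f p.2 p.1‖) := by
      refine (summable_prod_of_nonneg (fun p => norm_nonneg _)).2 ⟨fun n => (hG n).summable, ?_⟩
      exact hS.congr fun n => ((hG n).tsum_eq).symm
    exact ((Equiv.prodComm ℕ ℕ).summable_iff).1 hsw
  have hsumf : Summable (Function.uncurry f) := Summable.of_norm hsum_norm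
  have h₁ : ∀ k, Summable (f k) := fun k => hsumf.prod_factor k
  have h₂ : ∀ n, Summable (fun k => f k n) := fun n => hsumf.prod_symm.prod_factor n
  -- per-n complex hasSum over k
  have hk : ∀ n : ℕ, HasSum (fun k => f k n)
      ((((1-t) ^ (-(lam + (n:ℝ)*A)) : ℝ) : ℂ) * (z^n / (n.factorial : ℂ))) := by
    intro n
    have h0 := (Complex.hasSum_ofReal.2 (aux_hasSum (hrn n) ht)).mul_right
      (z^n / (n.factorial : ℂ))
    have heq : (fun k : ℕ => f k n) = fun k : ℕ =>
        ((Real.Gamma (lam + n*A + k) / Real.Gamma (lam + n*A) * t ^ k / k.factorial : ℝ) : ℂ)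
          * (z^n / (n.factorial : ℂ)) := by
      funext k
      simp only [hf, harg]
      push_cast
      ring
    rw [heq]
    exact h0
  -- rewrite LHS as iterated sum of f
  have hL : ∀ k : ℕ, ((t ^ k / k.factorial : ℝ) : ℂ) *
      ∑' n : ℕ, ((Real.Gamma (lam + k + n * A) / Real.Gamma (lam + n * A) : ℝ) : ℂ) *
        z ^ n / (n.factorial : ℂ) = ∑' n, f k n := by
    intro k
    rw [← tsum_mul_left]
    exact tsum_congr fun n => by simp only [hf]; ring
  rw [tsum_congr hL, ← Summable.tsum_comm' hsumf h₁ h₂, tsum_congr fun n => (hk n).tsum_eq]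
  -- final evaluation
  have hw : HasSum (fun n : ℕ => (z * (((1-t) ^ (-A) : ℝ) : ℂ))^n / (n.factorial : ℂ))
      (Complex.exp (z * (((1-t) ^ (-A) : ℝ) : ℂ))) := by
    rw [Complex.exp_eq_exp_ℂ]; exact NormedSpace.expSeries_div_hasSum_exp _
  have hfin := hw.mul_left ((((1-t) ^ (-lam) : ℝ)) : ℂ)
  have hdiv : z / (((1 - t) ^ A : ℝ) : ℂ) = z * (((1-t) ^ (-A) : ℝ) : ℂ) := by
    rw [Real.rpow_neg ht1.le, Complex.ofReal_inv, div_eq_mul_inv]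
  rw [hdiv, ← hfin.tsum_eq]
  refine tsum_congr fun n => ?_
  rw [aux_rpow ht1]
  push_cast
  ring
end

section
/- Let λ > 0. Then for every z ∈ ℂ and every real t with |t| < 1, ∑_{k=0}^∞ Γ(λ+k) · ₁F₁(λ+k; λ; z) · t^k/k! = Γ(λ) · (1−t)^{−λ} · exp(z/(1−t)), where ₁F₁(a;b;z) = ∑_{n=0}^∞ ((a)_n/(b)_n) z^n/n! is Kummer's confluent hypergeometric function and (τ)_n = Γ(τ+n)/Γ(τ) is the Pochhammer symbol. -/
open Real MeasureTheory Set

lemma gammaRatioSummable (μ : ℝ) (hμ : 0 < μ) (r : ℝ) (hr : |r| < 1) :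
    Summable (fun k : ℕ => Real.Gamma (μ + k) * r ^ k / k.factorial) := by
  rcases eq_or_ne r 0 with rfl | hr0
  · apply summable_of_ne_finset_zero (s := {0})
    intro k hk
    simp [zero_pow (by simpa using hk)]
  · apply summable_of_ratio_test_tendsto_lt_one hr
    · filter_upwards with k
      have h1 : 0 < Real.Gamma (μ + k) := Real.Gamma_pos_of_pos (by positivity)
      have h2 : (k.factorial : ℝ) ≠ 0 := by positivity
      positivity
    · have key : ∀ k : ℕ, ‖Real.Gamma (μ + ((k+1:ℕ):ℝ)) * r ^ (k+1) / ((k+1:ℕ).factorial:ℝ)‖ /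
          ‖Real.Gamma (μ + k) * r ^ k / k.factorial‖ = |r| * ((μ - 1) * (1/((k:ℝ)+1)) + 1) := by
        intro k
        push_cast
        have h1 : 0 < Real.Gamma (μ + k) := Real.Gamma_pos_of_pos (by positivity)
        have hg : Real.Gamma (μ + ((k:ℝ)+1)) = (μ + k) * Real.Gamma (μ + k) := by
          rw [show μ + ((k:ℝ)+1) = (μ + k) + 1 by ring, Real.Gamma_add_one (by positivity)]
        rw [hg]
        have hfact : ((k+1).factorial : ℝ) = (k+1) * k.factorial := by
          push_cast [Nat.factorial_succ]; ring
        have hk1 : (0:ℝ) < (k:ℝ) + 1 := by positivity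
        have hkf : (0:ℝ) < (k.factorial : ℝ) := by positivity
        simp only [Real.norm_eq_abs]
        rw [abs_div, abs_div, abs_mul, abs_mul, abs_mul, pow_succ, abs_mul,
          abs_of_pos h1, abs_of_pos (show (0:ℝ) < μ + k by positivity), hfact,
          abs_of_pos (by positivity : (0:ℝ) < ((k:ℝ)+1) * k.factorial), abs_of_pos hkf]
        have hrk : |r ^ k| = |r|^k := abs_pow r k
        have hra : (0:ℝ) < |r| := abs_pos.mpr hr0
        rw [hrk]
        field_simp
        ring
      have lim : Filter.Tendsto (fun k : ℕ => |r| * ((μ - 1) * (1/((k:ℝ)+1)) + 1))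
          Filter.atTop (nhds (|r| * ((μ - 1) * 0 + 1))) := by
        apply Filter.Tendsto.const_mul
        apply Filter.Tendsto.add_const
        apply Filter.Tendsto.const_mul
        exact tendsto_one_div_add_atTop_nhds_zero_nat
      simp only [mul_zero, zero_add, mul_one] at lim
      exact lim.congr fun k => (key k).symm

lemma kummerHasSum (μ : ℝ) (hμ : 0 < μ) (t : ℝ) (ht : |t| < 1) :
    HasSum (fun k : ℕ => Real.Gamma (μ + k) * t ^ k / k.factorial)
      (Real.Gamma μ * (1 - t) ^ (-μ)) := by
  obtain ⟨ht1, ht2⟩ := abs_lt.mp ht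
  have h1t : 0 < 1 - t := by linarith
  set F : ℕ → ℝ → ℝ := fun k x => (t ^ k / k.factorial) * (Real.exp (-x) * x ^ (μ + k - 1))
    with hF
  have hμk : ∀ k : ℕ, (0:ℝ) < μ + k := fun k => by positivity
  have hint : ∀ k : ℕ, IntegrableOn (F k) (Ioi 0) := fun k =>
    (Real.GammaIntegral_convergent (hμk k)).const_mul _
  have hnorm : ∀ k : ℕ, (∫ x in Ioi 0, ‖F k x‖) = Real.Gamma (μ + k) * |t| ^ k / k.factorial := by
    intro k
    have : ∀ x ∈ Ioi (0:ℝ), ‖F k x‖ = (|t| ^ k / k.factorial) * (Real.exp (-x) * x ^ (μ + k - 1)) := by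
      intro x hx
      rw [hF]
      have h1 : (0:ℝ) < x ^ (μ + k - 1) := Real.rpow_pos_of_pos hx _
      rw [Real.norm_eq_abs, abs_mul, abs_div, abs_pow, abs_of_pos (by positivity : (0:ℝ) < (k.factorial:ℝ)),
        abs_of_pos (by positivity : (0:ℝ) < Real.exp (-x) * x ^ (μ + k - 1))]
    rw [setIntegral_congr_fun measurableSet_Ioi this, MeasureTheory.integral_const_mul,
      ← Real.Gamma_eq_integral (hμk k)]
    ring
  have hsum : Summable fun k : ℕ => ∫ x in Ioi 0, ‖F k x‖ := by
    simp only [hnorm]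
    exact gammaRatioSummable μ hμ |t| (by rwa [abs_abs])
  have key := hasSum_integral_of_summable_integral_norm hint hsum
  have hFk : ∀ k : ℕ, (∫ x in Ioi 0, F k x) = Real.Gamma (μ + k) * t ^ k / k.factorial := by
    intro k
    rw [hF]
    simp only
    rw [MeasureTheory.integral_const_mul, ← Real.Gamma_eq_integral (hμk k)]
    ring
  have hptwise : ∀ x ∈ Ioi (0:ℝ), (∑' k : ℕ, F k x) = x ^ (μ - 1) * Real.exp (-((1 - t) * x)) := by
    intro x hx
    have hx0 : (0:ℝ) < x := hx
    have hxk : ∀ k : ℕ, x ^ (μ + k - 1) = x ^ (μ - 1) * x ^ k := by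
      intro k
      rw [show μ + k - 1 = (μ - 1) + k by ring, Real.rpow_add hx0, Real.rpow_natCast]
    have : ∀ k : ℕ, F k x = (Real.exp (-x) * x ^ (μ - 1)) * ((t * x) ^ k / k.factorial) := by
      intro k
      rw [hF]; simp only
      rw [hxk k, mul_pow]
      ring
    rw [tsum_congr this, tsum_mul_left]
    have hexp : (∑' k : ℕ, (t * x) ^ k / (k.factorial : ℝ)) = Real.exp (t * x) := by
      rw [Real.exp_eq_exp_ℝ, NormedSpace.exp_eq_tsum_div]
    rw [hexp, show Real.exp (-x) * x ^ (μ - 1) * Real.exp (t * x)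
        = x ^ (μ - 1) * (Real.exp (-x) * Real.exp (t * x)) from by ring, ← Real.exp_add,
      show -x + t * x = -((1 - t) * x) from by ring]
  have hInt2 : (∫ x in Ioi 0, ∑' k : ℕ, F k x) = Real.Gamma μ * (1 - t) ^ (-μ) := by
    rw [setIntegral_congr_fun measurableSet_Ioi hptwise,
      integral_rpow_mul_exp_neg_mul_Ioi hμ h1t, one_div,
      Real.inv_rpow h1t.le, ← Real.rpow_neg h1t.le]
    ring
  rw [hInt2] at key
  have heq : (fun k : ℕ => Real.Gamma (μ + k) * t ^ k / k.factorial)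
      = fun k : ℕ => ∫ x in Ioi 0, F k x := funext fun k => (hFk k).symm
  rw [heq]
  exact key

/-- `∑_k Γ(λ+k) ₁F₁(λ+k;λ;z) t^k/k! = Γ(λ)(1-t)^{-λ} exp(z/(1-t))`,
where `₁F₁(a;b;z) = ∑_n ((a)_n/(b)_n) z^n/n!` and `(τ)_n = Γ(τ+n)/Γ(τ)`. -/
theorem kummer_generating_function
    (lam : ℝ) (hlam : 0 < lam)
    (z : ℂ) (t : ℝ) (ht : |t| < 1) :
    ∑' k : ℕ, (Real.Gamma (lam + k) : ℂ) *
      (∑' n : ℕ, (((Real.Gamma (lam + k + n) / Real.Gamma (lam + k)) /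
          (Real.Gamma (lam + n) / Real.Gamma lam) : ℝ) : ℂ) * z ^ n / (n.factorial : ℂ)) *
      ((t ^ k / k.factorial : ℝ) : ℂ)
    = (Real.Gamma lam : ℂ) * (((1 - t) ^ (-lam) : ℝ) : ℂ) *
      Complex.exp (z / ((1 - t : ℝ) : ℂ)) := by
  obtain ⟨ht1, ht2⟩ := abs_lt.mp ht
  have h1t : 0 < 1 - t := by linarith
  have hs : |(|t|)| < 1 := by rwa [abs_abs]
  have h1s : 0 < 1 - |t| := by have := abs_lt.mp hs; linarith
  have hg : ∀ x : ℝ, 0 < x → (0:ℝ) < Real.Gamma x := fun x hx => Real.Gamma_pos_of_pos hx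
  set T : ℕ → ℕ → ℂ := fun k n =>
    ((Real.Gamma (lam + n + k) * t ^ k / k.factorial : ℝ) : ℂ) *
      ((Real.Gamma lam / Real.Gamma (lam + n) : ℝ) : ℂ) * (z ^ n / n.factorial) with hT
  -- Step 1: rewrite the LHS as an iterated sum of T
  have step1 : ∑' k : ℕ, (Real.Gamma (lam + k) : ℂ) *
      (∑' n : ℕ, (((Real.Gamma (lam + k + n) / Real.Gamma (lam + k)) /
          (Real.Gamma (lam + n) / Real.Gamma lam) : ℝ) : ℂ) * z ^ n / (n.factorial : ℂ)) *
      ((t ^ k / k.factorial : ℝ) : ℂ) = ∑' k : ℕ, ∑' n : ℕ, T k n := by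
    refine tsum_congr fun k => ?_
    rw [← tsum_mul_left, ← tsum_mul_right]
    refine tsum_congr fun n => ?_
    rw [hT]
    have h1 : (Real.Gamma (lam + k) : ℝ) ≠ 0 := (hg _ (by positivity)).ne'
    have h2 : (Real.Gamma (lam + n) : ℝ) ≠ 0 := (hg _ (by positivity)).ne'
    have h3 : (Real.Gamma lam : ℝ) ≠ 0 := (hg _ hlam).ne'
    have h4 : ((n.factorial : ℂ)) ≠ 0 := Nat.cast_ne_zero.mpr n.factorial_ne_zero
    have h5 : ((k.factorial : ℂ)) ≠ 0 := Nat.cast_ne_zero.mpr k.factorial_ne_zero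
    have harg : lam + (k:ℝ) + n = lam + n + k := by ring
    rw [harg]
    have h1' : ((Real.Gamma (lam + k) : ℝ) : ℂ) ≠ 0 := by exact_mod_cast h1
    have h2' : ((Real.Gamma (lam + n) : ℝ) : ℂ) ≠ 0 := by exact_mod_cast h2
    have h3' : ((Real.Gamma lam : ℝ) : ℂ) ≠ 0 := by exact_mod_cast h3
    push_cast
    field_simp
  -- Norm of T
  have hnormT : ∀ k n : ℕ, ‖T k n‖ = (Real.Gamma (lam + n + k) * |t| ^ k / k.factorial) *
      ((Real.Gamma lam / Real.Gamma (lam + n)) * (‖z‖ ^ n / n.factorial)) := by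
    intro k n
    rw [hT]
    simp only [norm_mul, norm_div, Complex.norm_real, Complex.norm_natCast, norm_pow,
      Real.norm_eq_abs, Nat.abs_cast, abs_mul, abs_div, abs_pow]
    rw [abs_of_pos (hg _ (by positivity : (0:ℝ) < lam + n + k)), abs_of_pos (hg _ hlam),
      abs_of_pos (hg _ (by positivity : (0:ℝ) < lam + n))]
    ring
  -- Row sums (over k, for fixed n), with |t|
  have hrow : ∀ n : ℕ, HasSum (fun k => ‖T k n‖)
      ((Real.Gamma (lam + n) * (1 - |t|) ^ (-(lam + (n:ℝ)))) *
        ((Real.Gamma lam / Real.Gamma (lam + n)) * (‖z‖ ^ n / n.factorial))) := by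
    intro n
    have := (kummerHasSum (lam + n) (by positivity) |t| hs).mul_right
      ((Real.Gamma lam / Real.Gamma (lam + n)) * (‖z‖ ^ n / n.factorial))
    refine this.congr_fun fun k => ?_
    rw [hnormT k n, show lam + (n:ℝ) + k = lam + n + k from by ring]
  -- summability of the uncurried double sum
  have hsummT : Summable (Function.uncurry T) := by
    apply Summable.of_norm
    have hgsum : Summable (fun p : ℕ × ℕ => ‖T p.2 p.1‖) := by
      rw [summable_prod_of_nonneg (fun p => norm_nonneg _)]
      constructor
      · intro n
        exact (hrow n).summable
      · refine Summable.of_nonneg_of_le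
          (fun n => tsum_nonneg fun k => norm_nonneg _)
          (fun n => le_of_eq ?_)
          (((Real.summable_pow_div_factorial (‖z‖ / (1 - |t|))).mul_left
            (Real.Gamma lam * (1 - |t|) ^ (-lam))))
        rw [show (∑' k : ℕ, ‖T ((n, k)).2 ((n, k)).1‖) = ∑' k : ℕ, ‖T k n‖ from rfl,
          (hrow n).tsum_eq]
        have h2 : (Real.Gamma (lam + n) : ℝ) ≠ 0 := (hg _ (by positivity)).ne'
        have hrpow : (1 - |t|) ^ (-(lam + (n:ℝ)))
            = (1 - |t|) ^ (-lam) * ((1 - |t|) ^ (n:ℕ))⁻¹ := by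
          rw [neg_add, Real.rpow_add h1s]
          congr 1
          rw [Real.rpow_neg h1s.le, Real.rpow_natCast]
        rw [hrpow, div_pow]
        have hne : ((1 - |t|) ^ (n:ℕ)) ≠ 0 := by positivity
        field_simp
    exact ((Equiv.prodComm ℕ ℕ).summable_iff).mp hgsum
  rw [step1, ← hsummT.tsum_comm]
  -- Step 3: evaluate the sum over k for each n, then sum over n
  have step3 : ∀ n : ℕ, ∑' k : ℕ, T k n
      = ((Real.Gamma lam * (1 - t) ^ (-lam) : ℝ) : ℂ) * ((z / ((1 - t : ℝ) : ℂ)) ^ n / n.factorial) := by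
    intro n
    have hsum_k := kummerHasSum (lam + n) (by positivity) t ht
    have : ∑' k : ℕ, T k n
        = ((Real.Gamma (lam + n) * (1 - t) ^ (-(lam + (n:ℝ))) : ℝ) : ℂ) *
          (((Real.Gamma lam / Real.Gamma (lam + n) : ℝ) : ℂ) * (z ^ n / n.factorial)) := by
      rw [hT]
      simp only [mul_assoc]
      rw [tsum_mul_right, ← Complex.ofReal_tsum, hsum_k.tsum_eq]
    rw [this]
    have h2 : (Real.Gamma (lam + n) : ℝ) ≠ 0 := (hg _ (by positivity)).ne'
    have h2' : ((Real.Gamma (lam + n) : ℝ) : ℂ) ≠ 0 := by exact_mod_cast h2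
    have hrpow : (1 - t) ^ (-(lam + (n:ℝ)))
        = (1 - t) ^ (-lam) * ((1 - t) ^ (n:ℕ))⁻¹ := by
      rw [neg_add, Real.rpow_add h1t]
      congr 1
      rw [Real.rpow_neg h1t.le, Real.rpow_natCast]
    have hcoef : Real.Gamma (lam + n) * (1 - t) ^ (-(lam + (n:ℝ)))
        * (Real.Gamma lam / Real.Gamma (lam + n))
        = Real.Gamma lam * (1 - t) ^ (-lam) * ((1 - t) ^ (n:ℕ))⁻¹ := by
      rw [hrpow]
      field_simp
    rw [show ((Real.Gamma (lam + n) * (1 - t) ^ (-(lam + (n:ℝ))) : ℝ) : ℂ) *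
          (((Real.Gamma lam / Real.Gamma (lam + n) : ℝ) : ℂ) * (z ^ n / n.factorial))
        = ((Real.Gamma (lam + n) * (1 - t) ^ (-(lam + (n:ℝ)))
            * (Real.Gamma lam / Real.Gamma (lam + n)) : ℝ) : ℂ) * (z ^ n / n.factorial) from by
      push_cast; ring, hcoef]
    have hne : ((1:ℂ) - (t:ℂ)) ≠ 0 := by
      intro h
      have : ((1 - t : ℝ) : ℂ) = 0 := by push_cast; linear_combination h
      exact h1t.ne' (by exact_mod_cast this)
    push_cast
    rw [div_pow]
    field_simp
  rw [tsum_congr step3, tsum_mul_left]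
  have hexp : (∑' n : ℕ, (z / ((1 - t : ℝ) : ℂ)) ^ n / (n.factorial : ℂ))
      = Complex.exp (z / ((1 - t : ℝ) : ℂ)) := by
    rw [Complex.exp_eq_exp_ℂ, NormedSpace.exp_eq_tsum_div]
  rw [hexp]
  push_cast
  ring
end

section
/- Let p, q be positive integers with p ≤ q, and let a_1,…,a_p > 0 and b_1,…,b_q > 0. Then for every z ∈ ℂ and every real t with |t| < 1, ∑_{k=0}^∞ Γ(a_1+k) · pFq(a_1+k, a_2,…,a_p; a_1, b_2,…,b_q; z) · t^k/k! = Γ(a_1) · (1−t)^{−a_1} · (p−1)F(q−1)(a_2,…,a_p; b_2,…,b_q; z/(1−t)). -/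
open scoped BigOperators

open Filter in
lemma gamma_ratio_summable (s t : ℝ) (hs : 0 < s) (ht : |t| < 1) :
    Summable (fun k : ℕ => Real.Gamma (s + k) * t ^ k / (k.factorial : ℝ)) := by
  have hr : (1 + |t|) / 2 < 1 := by linarith
  apply summable_of_ratio_norm_eventually_le hr
  have htend : Tendsto (fun k : ℕ => (s + k) * |t| / (k + 1)) atTop (nhds |t|) := by
    have h0 : Tendsto (fun k : ℕ => (1 : ℝ) / (k + 1)) atTop (nhds 0) :=
      tendsto_one_div_add_atTop_nhds_zero_nat
    have : Tendsto (fun k : ℕ => ((s - 1) * (1 / (k + 1)) + 1) * |t|) atTop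
        (nhds (((s - 1) * 0 + 1) * |t|)) := by
      exact (((h0.const_mul (s-1)).add tendsto_const_nhds).mul tendsto_const_nhds)
    simp only [mul_zero, zero_add, one_mul] at this
    have heq : (fun k : ℕ => (s + k) * |t| / (k + 1))
        = fun k : ℕ => ((s - 1) * (1 / (k + 1)) + 1) * |t| := by
      funext k
      have hk : (k : ℝ) + 1 ≠ 0 := by positivity
      field_simp
      ring
    rw [heq]
    exact this
  have hlt : ∀ᶠ k : ℕ in atTop, (s + k) * |t| / (k + 1) ≤ (1 + |t|) / 2 := by
    exact htend.eventually_le_const (show |t| < (1 + |t|) / 2 by linarith)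
  filter_upwards [hlt] with k hk
  have hΓ : (0:ℝ) < Real.Gamma (s + k) := Real.Gamma_pos_of_pos (by positivity)
  have hrec : Real.Gamma (s + (k+1:ℕ)) = (s + k) * Real.Gamma (s + k) := by
    push_cast
    rw [show s + ((k:ℝ) + 1) = (s + k) + 1 by ring, Real.Gamma_add_one (by positivity)]
  rw [hrec]
  have hfac : ((k+1).factorial : ℝ) = (k+1) * k.factorial := by
    push_cast [Nat.factorial_succ]; ring
  rw [Real.norm_eq_abs, Real.norm_eq_abs, abs_div, abs_div, abs_mul, abs_mul, abs_mul,
    abs_pow, abs_pow, hfac]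
  rw [abs_of_pos hΓ, abs_of_pos (show (0:ℝ) < s + k by positivity)]
  rw [abs_of_pos (show (0:ℝ) < ((k+1:ℝ)) * k.factorial by positivity),
    abs_of_pos (show (0:ℝ) < (k.factorial : ℝ) by positivity)]
  rw [pow_succ]
  have hk1 : (0:ℝ) < (k:ℝ) + 1 := by positivity
  calc (s + ↑k) * Real.Gamma (s + ↑k) * (|t| ^ k * |t|) / ((↑k + 1) * ↑k.factorial)
      = ((s + ↑k) * |t| / (↑k + 1)) * (Real.Gamma (s + ↑k) * |t| ^ k / ↑k.factorial) := by
        field_simp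
    _ ≤ ((1 + |t|) / 2) * (Real.Gamma (s + ↑k) * |t| ^ k / ↑k.factorial) := by
        apply mul_le_mul_of_nonneg_right hk
        positivity

open MeasureTheory in
lemma gamma_binomial_hasSum (s t : ℝ) (hs : 0 < s) (ht : |t| < 1) :
    HasSum (fun k : ℕ => Real.Gamma (s + k) * t ^ k / (k.factorial : ℝ))
      (Real.Gamma s * (1 - t) ^ (-s)) := by
  have ht1 : 0 < 1 - t := by
    have := abs_lt.mp ht; linarith [this.2]
  set μ := volume.restrict (Set.Ioi (0:ℝ)) with hμ
  set F : ℕ → ℝ → ℝ := fun k x => Real.exp (-x) * x ^ (s + k - 1) * (t ^ k / k.factorial)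
    with hF
  have hspos : ∀ k : ℕ, (0:ℝ) < s + k := fun k => by positivity
  have hF_int : ∀ k : ℕ, Integrable (F k) μ :=
    fun k => (Real.GammaIntegral_convergent (hspos k)).mul_const _
  have key : ∀ k : ℕ, ∀ u : ℝ, ∫ x in Set.Ioi (0:ℝ), Real.exp (-x) * x ^ (s + k - 1)
      * (u ^ k / k.factorial) = Real.Gamma (s + k) * u ^ k / k.factorial := by
    intro k u
    rw [MeasureTheory.integral_mul_const, ← Real.Gamma_eq_integral (hspos k)]
    ring
  have hnorm : ∀ k : ℕ, ∫ x, ‖F k x‖ ∂μ = Real.Gamma (s + k) * |t| ^ k / k.factorial := by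
    intro k
    rw [hμ, ← key k |t|]
    apply setIntegral_congr_fun measurableSet_Ioi
    intro x hx
    simp only [hF, norm_mul, norm_div, Real.norm_eq_abs, abs_pow]
    rw [abs_of_pos (Real.exp_pos _), abs_of_pos (Real.rpow_pos_of_pos hx _),
      abs_of_pos (show (0:ℝ) < (k.factorial:ℝ) by positivity)]
  have hF_sum : Summable fun k => ∫ x, ‖F k x‖ ∂μ := by
    simp only [hnorm]
    exact gamma_ratio_summable s |t| hs (by rwa [abs_abs])
  have hmain := MeasureTheory.hasSum_integral_of_summable_integral_norm hF_int hF_sum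
  have hint_eq : ∀ k : ℕ, ∫ x, F k x ∂μ = Real.Gamma (s + k) * t ^ k / k.factorial := by
    intro k; rw [hμ, hF]; exact key k t
  have htsum_eq : (∫ x, (∑' k, F k x) ∂μ) = Real.Gamma s * (1 - t) ^ (-s) := by
    have hptwise : ∀ x ∈ Set.Ioi (0:ℝ),
        (∑' k, F k x) = x ^ (s - 1) * Real.exp (-((1 - t) * x)) := by
      intro x hx
      have hxpos : (0:ℝ) < x := hx
      have hexp : HasSum (fun k : ℕ => (t * x) ^ k / k.factorial) (Real.exp (t * x)) := by
        rw [Real.exp_eq_exp_ℝ]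
        exact NormedSpace.expSeries_div_hasSum_exp (t * x)
      have h2 : HasSum (fun k : ℕ => F k x)
          (Real.exp (-x) * x ^ (s - 1) * Real.exp (t * x)) := by
        have := hexp.mul_left (Real.exp (-x) * x ^ (s - 1))
        convert this using 2 with k
        · rfl
        rw [hF]
        simp only
        rw [show s + k - 1 = (s - 1) + (k:ℝ) by ring, Real.rpow_add hxpos,
          Real.rpow_natCast, mul_pow]
        ring
      rw [h2.tsum_eq, show -((1 - t) * x) = -x + t * x by ring, Real.exp_add]
      ring
    rw [hμ, setIntegral_congr_fun measurableSet_Ioi hptwise,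
      Real.integral_rpow_mul_exp_neg_mul_Ioi hs ht1,
      Real.rpow_neg (le_of_lt ht1), one_div, Real.inv_rpow (le_of_lt ht1)]
    ring
  have hfe : (fun k : ℕ => ∫ x, F k x ∂μ)
      = fun k : ℕ => Real.Gamma (s + k) * t ^ k / k.factorial := funext hint_eq
  rw [hfe, htsum_eq] at hmain
  exact hmain

lemma hyp_summable {N M : ℕ} (hNM : N ≤ M) (a : Fin N → ℝ) (b : Fin M → ℝ)
    (ha : ∀ l, 0 < a l) (hb : ∀ m, 0 < b m) (r : ℝ) (hr : 0 ≤ r) :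
    Summable (fun n : ℕ =>
      ((∏ l, Real.Gamma (a l + n) / Real.Gamma (a l)) /
        (∏ m, Real.Gamma (b m + n) / Real.Gamma (b m))) * r ^ n / (n.factorial : ℝ)) := by
  set A : ℕ → ℝ := fun n => (∏ l, Real.Gamma (a l + n) / Real.Gamma (a l)) /
        (∏ m, Real.Gamma (b m + n) / Real.Gamma (b m)) with hA
  have hApos : ∀ n, 0 < A n := by
    intro n
    apply div_pos <;> apply Finset.prod_pos <;> intro i _ <;>
      apply div_pos <;> apply Real.Gamma_pos_of_pos
    · have := ha i; positivity
    · exact ha i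
    · have := hb i; positivity
    · exact hb i
  have hArec : ∀ n : ℕ, A (n + 1) = A n * ((∏ l, (a l + n)) / (∏ m, (b m + n))) := by
    intro n
    have hnum : ∀ (c : ℝ), 0 < c → Real.Gamma (c + (n+1:ℕ)) = (c + n) * Real.Gamma (c + n) := by
      intro c hc
      push_cast
      rw [show c + ((n:ℝ) + 1) = (c + n) + 1 by ring, Real.Gamma_add_one (by positivity)]
    rw [hA]
    simp only
    rw [div_mul_div_comm]
    congr 1
    · rw [← Finset.prod_mul_distrib]
      apply Finset.prod_congr rfl
      intro l _
      rw [hnum (a l) (ha l)]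
      ring
    · rw [← Finset.prod_mul_distrib]
      apply Finset.prod_congr rfl
      intro m _
      rw [hnum (b m) (hb m)]
      ring
  set K : ℝ := ∏ l, (a l + 1) with hK
  have hKpos : 0 < K := Finset.prod_pos fun l _ => by linarith [ha l]
  have hPle : ∀ n : ℕ, 1 ≤ n → (∏ l, (a l + n)) / (∏ m, (b m + n)) ≤ K := by
    intro n hn
    have hn1 : (1:ℝ) ≤ (n:ℝ) := by exact_mod_cast hn
    have hnum : (∏ l, (a l + n)) ≤ K * (n:ℝ) ^ N := by
      calc (∏ l, (a l + (n:ℝ))) ≤ ∏ l, ((a l + 1) * n) := by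
            apply Finset.prod_le_prod
            · intro l _; have := ha l; positivity
            · intro l _; nlinarith [ha l]
        _ = K * (n:ℝ) ^ N := by
            rw [Finset.prod_mul_distrib, hK, Finset.prod_const, Finset.card_univ,
              Fintype.card_fin]
    have hden : (n:ℝ) ^ N ≤ ∏ m, (b m + n) := by
      calc (n:ℝ) ^ N ≤ (n:ℝ) ^ M := pow_le_pow_right₀ hn1 hNM
        _ = ∏ m : Fin M, (n:ℝ) := by
            rw [Finset.prod_const, Finset.card_univ, Fintype.card_fin]
        _ ≤ ∏ m, (b m + n) := by
            apply Finset.prod_le_prod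
            · intro m _; have := hb m; positivity
            · intro m _; linarith [hb m]
    have hnN : (0:ℝ) < (n:ℝ) ^ N := by positivity
    calc (∏ l, (a l + n)) / (∏ m, (b m + n)) ≤ (K * (n:ℝ)^N) / ((n:ℝ)^N) :=
          div_le_div₀ (by positivity) hnum hnN hden
      _ = K := by field_simp
  apply summable_of_ratio_norm_eventually_le (r := 1/2) (by norm_num)
  have h0 : Filter.Tendsto (fun n : ℕ => K * r * (1 / (n + 1))) Filter.atTop (nhds 0) := by
    have := tendsto_one_div_add_atTop_nhds_zero_nat.const_mul (K * r)
    simpa using this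
  have hev : ∀ᶠ n : ℕ in Filter.atTop, K * r * (1 / (n + 1)) ≤ 1/2 :=
    h0.eventually_le_const (by norm_num)
  filter_upwards [hev, Filter.eventually_ge_atTop 1] with n hn hn1
  have hn1' : (1:ℝ) ≤ (n:ℝ) + 1 := by
    have : (0:ℝ) ≤ n := Nat.cast_nonneg n
    linarith
  have hfac : ((n+1).factorial : ℝ) = (n+1) * n.factorial := by
    push_cast [Nat.factorial_succ]; ring
  have hterm : A (n+1) * r ^ (n+1) / ((n+1).factorial : ℝ)
      = (((∏ l, (a l + n)) / (∏ m, (b m + n))) * r / (n+1))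
        * (A n * r ^ n / (n.factorial : ℝ)) := by
    rw [hArec n, hfac, pow_succ]
    have h1 : ((n:ℝ) + 1) ≠ 0 := by positivity
    have h2 : ((n.factorial : ℝ)) ≠ 0 := by positivity
    field_simp
  rw [Real.norm_eq_abs, Real.norm_eq_abs, hterm]
  have hAn : 0 ≤ A n * r ^ n / (n.factorial : ℝ) := by
    have := (hApos n).le
    positivity
  have hPn : 0 ≤ (∏ l, (a l + n)) / (∏ m, (b m + n)) := by
    apply div_nonneg <;> apply Finset.prod_nonneg <;> intro i _
    · have := ha i; positivity
    · have := hb i; positivity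
  rw [abs_mul, abs_of_nonneg hAn, abs_of_nonneg (by positivity : (0:ℝ) ≤ ((∏ l, (a l + n)) / (∏ m, (b m + n))) * r / (n+1))]
  apply mul_le_mul_of_nonneg_right _ hAn
  calc ((∏ l, (a l + n)) / (∏ m, (b m + n))) * r / (n+1)
      ≤ K * r / (n + 1) := by
        apply div_le_div_of_nonneg_right _ ?_ |>.trans_eq rfl
        · exact mul_le_mul_of_nonneg_right (hPle n hn1) hr
        · positivity
    _ = K * r * (1 / (n+1)) := by ring
    _ ≤ 1/2 := hn

/-- `∑_k Γ(a₁+k) pFq(a₁+k,a₂,…,a_p; a₁,b₂,…,b_q; z) t^k/k!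
  = Γ(a₁)(1-t)^{-a₁} (p-1)F(q-1)(a₂,…,a_p; b₂,…,b_q; z/(1-t))`,
where `(τ)_n = Γ(τ+n)/Γ(τ)` and `pFq` is the generalized hypergeometric series. -/
theorem hypergeometric_generating_function
    (p q : ℕ) (hp : 1 ≤ p) (hq : 1 ≤ q) (hpq : p ≤ q)
    (a1 : ℝ) (ha1 : 0 < a1)
    (a : Fin (p - 1) → ℝ) (b : Fin (q - 1) → ℝ)
    (ha : ∀ l, 0 < a l) (hb : ∀ m, 0 < b m)
    (z : ℂ) (t : ℝ) (ht : |t| < 1) :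
    ∑' k : ℕ, (Real.Gamma (a1 + k) : ℂ) *
      (∑' n : ℕ, ((((Real.Gamma (a1 + k + n) / Real.Gamma (a1 + k)) *
            ∏ l, Real.Gamma (a l + n) / Real.Gamma (a l)) /
          ((Real.Gamma (a1 + n) / Real.Gamma a1) *
            ∏ m, Real.Gamma (b m + n) / Real.Gamma (b m)) : ℝ) : ℂ) *
        z ^ n / (n.factorial : ℂ)) *
      ((t ^ k / k.factorial : ℝ) : ℂ)
    = (Real.Gamma a1 : ℂ) * (((1 - t) ^ (-a1) : ℝ) : ℂ) *
      ∑' n : ℕ, (((∏ l, Real.Gamma (a l + n) / Real.Gamma (a l)) /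
          (∏ m, Real.Gamma (b m + n) / Real.Gamma (b m)) : ℝ) : ℂ) *
        (z / ((1 - t : ℝ) : ℂ)) ^ n / (n.factorial : ℂ) := by
  have habs := abs_lt.mp ht
  have ht1 : 0 < 1 - t := by linarith
  have ht1' : 0 < 1 - |t| := by
    rcases abs_cases t with ⟨h1, _⟩ | ⟨h1, _⟩ <;> rw [h1] <;> linarith
  have htabs : |(|t|)| < 1 := by rwa [abs_abs]
  have hNM : p - 1 ≤ q - 1 := Nat.sub_le_sub_right hpq 1
  -- abbreviations
  set Pa : ℕ → ℝ := fun n => ∏ l, Real.Gamma (a l + n) / Real.Gamma (a l) with hPa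
  set Pb : ℕ → ℝ := fun n => ∏ m, Real.Gamma (b m + n) / Real.Gamma (b m) with hPb
  set A : ℕ → ℝ := fun n => Pa n / Pb n with hAdef
  have hPa_pos : ∀ n, 0 < Pa n := fun n => Finset.prod_pos fun l _ =>
    div_pos (Real.Gamma_pos_of_pos (by have := ha l; positivity))
      (Real.Gamma_pos_of_pos (ha l))
  have hPb_pos : ∀ n, 0 < Pb n := fun n => Finset.prod_pos fun m _ =>
    div_pos (Real.Gamma_pos_of_pos (by have := hb m; positivity))
      (Real.Gamma_pos_of_pos (hb m))
  have hA_pos : ∀ n, 0 < A n := fun n => div_pos (hPa_pos n) (hPb_pos n)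
  set coeff : ℕ → ℕ → ℝ := fun k n =>
    ((Real.Gamma (a1 + k + n) / Real.Gamma (a1 + k)) * Pa n) /
      ((Real.Gamma (a1 + n) / Real.Gamma a1) * Pb n) with hcoeff
  have hΓ1 : (0:ℝ) < Real.Gamma a1 := Real.Gamma_pos_of_pos ha1
  have hΓk : ∀ k : ℕ, (0:ℝ) < Real.Gamma (a1 + k) :=
    fun k => Real.Gamma_pos_of_pos (by positivity)
  have hΓkn : ∀ k n : ℕ, (0:ℝ) < Real.Gamma (a1 + n + k) :=
    fun k n => Real.Gamma_pos_of_pos (by positivity)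
  have hcoeff_pos : ∀ k n, 0 < coeff k n := by
    intro k n
    apply div_pos
    · exact mul_pos (div_pos (by rw [show a1+(k:ℝ)+n = a1+n+k by ring]; exact hΓkn k n)
        (hΓk k)) (hPa_pos n)
    · exact mul_pos (div_pos (Real.Gamma_pos_of_pos (by positivity)) hΓ1) (hPb_pos n)
  -- the key real algebraic identity
  have hkey : ∀ k n : ℕ, Real.Gamma (a1 + k) * coeff k n
      = Real.Gamma (a1 + n + k) * (Real.Gamma a1 / Real.Gamma (a1 + n)) * A n := by
    intro k n
    rw [hcoeff, hAdef]
    simp only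
    rw [show a1 + (k:ℝ) + n = a1 + n + k by ring]
    have h1 := (hΓk k).ne'
    have h2 := (Real.Gamma_pos_of_pos (show (0:ℝ) < a1 + n by positivity)).ne'
    have h3 := hΓ1.ne'
    have h4 := (hPb_pos n).ne'
    field_simp
  -- the summand
  set T : ℕ → ℕ → ℂ := fun k n => (Real.Gamma (a1 + k) : ℂ) *
      (((coeff k n : ℝ) : ℂ) * z ^ n / (n.factorial : ℂ)) * ((t ^ k / k.factorial : ℝ) : ℂ)
    with hT
  -- norm of the summand
  have hTnorm : ∀ k n : ℕ, ‖T k n‖ =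
      (Real.Gamma a1 / Real.Gamma (a1 + n) * A n * ‖z‖ ^ n / (n.factorial : ℝ))
        * (Real.Gamma (a1 + n + k) * |t| ^ k / (k.factorial : ℝ)) := by
    intro k n
    rw [hT]
    simp only [norm_mul, norm_div, Complex.norm_real, norm_pow, Complex.norm_natCast,
      Real.norm_eq_abs]
    rw [abs_of_pos (hΓk k), abs_of_pos (hcoeff_pos k n),
      abs_of_pos (show (0:ℝ) < (k.factorial : ℝ) by positivity)]
    rw [show Real.Gamma (a1 + k) * (coeff k n * ‖z‖ ^ n / (n.factorial : ℝ))
        * (|t| ^ k / (k.factorial : ℝ))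
        = (Real.Gamma (a1 + k) * coeff k n) * (‖z‖ ^ n / (n.factorial : ℝ))
          * (|t| ^ k / (k.factorial : ℝ)) from by ring, hkey k n]
    ring
  -- row sums (absolute values)
  have hrow_abs : ∀ n : ℕ, HasSum
      (fun k : ℕ => Real.Gamma (a1 + n + k) * |t| ^ k / (k.factorial : ℝ))
      (Real.Gamma (a1 + n) * (1 - |t|) ^ (-(a1 + (n:ℝ)))) :=
    fun n => gamma_binomial_hasSum (a1 + n) |t| (by positivity) htabs
  have hrow_t : ∀ n : ℕ, HasSum
      (fun k : ℕ => Real.Gamma (a1 + n + k) * t ^ k / (k.factorial : ℝ))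
      (Real.Gamma (a1 + n) * (1 - t) ^ (-(a1 + (n:ℝ)))) :=
    fun n => gamma_binomial_hasSum (a1 + n) t (by positivity) ht
  have hsplit : ∀ u : ℝ, 0 < u → ∀ n : ℕ,
      u ^ (-(a1 + (n:ℝ))) = u ^ (-a1) * ((u ^ n : ℝ))⁻¹ := by
    intro u hu n
    rw [show -(a1 + (n:ℝ)) = -a1 + -(n:ℝ) by ring, Real.rpow_add hu, Real.rpow_neg hu.le,
      Real.rpow_neg hu.le, Real.rpow_natCast]
  set r : ℝ := ‖z‖ / (1 - |t|) with hrdef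
  have hr : 0 ≤ r := by positivity
  have hrowsum : ∀ n : ℕ, ∑' k : ℕ, ‖T k n‖
      = (Real.Gamma a1 * (1 - |t|) ^ (-a1)) * (A n * r ^ n / (n.factorial : ℝ)) := by
    intro n
    have hΓn : Real.Gamma (a1 + n) ≠ 0 :=
      (Real.Gamma_pos_of_pos (show (0:ℝ) < a1 + n by positivity)).ne'
    calc ∑' k : ℕ, ‖T k n‖
        = ∑' k : ℕ, (Real.Gamma a1 / Real.Gamma (a1 + n) * A n * ‖z‖ ^ n / (n.factorial : ℝ))
            * (Real.Gamma (a1 + n + k) * |t| ^ k / (k.factorial : ℝ)) := by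
          exact tsum_congr fun k => hTnorm k n
      _ = (Real.Gamma a1 / Real.Gamma (a1 + n) * A n * ‖z‖ ^ n / (n.factorial : ℝ))
            * (Real.Gamma (a1 + n) * (1 - |t|) ^ (-(a1 + (n:ℝ)))) := by
          rw [tsum_mul_left, (hrow_abs n).tsum_eq]
      _ = (Real.Gamma a1 * (1 - |t|) ^ (-a1)) * (A n * r ^ n / (n.factorial : ℝ)) := by
          rw [hsplit _ ht1' n, hrdef, div_pow]
          have h1 : ((1 - |t|) ^ n : ℝ) ≠ 0 := by positivity
          have h2 : ((n.factorial : ℝ)) ≠ 0 := by positivity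
          field_simp
  -- summability over the product
  have hsum_norm : Summable (fun w : ℕ × ℕ => ‖T w.2 w.1‖) := by
    apply (summable_prod_of_nonneg (fun w => norm_nonneg _)).mpr
    constructor
    · intro n
      exact (((hrow_abs n).summable.mul_left _).congr fun k => (hTnorm k n).symm)
    · apply Summable.congr
        ((hyp_summable hNM a b ha hb r hr).mul_left (Real.Gamma a1 * (1 - |t|) ^ (-a1)))
      intro n
      exact (hrowsum n).symm
  have hTS : Summable (fun w : ℕ × ℕ => T w.2 w.1) := Summable.of_norm hsum_norm
  have huncurry : Summable (Function.uncurry T) := by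
    have := hTS.prod_symm
    exact (by simpa using this : Summable fun p : ℕ × ℕ => T p.1 p.2)
  have h1s : ∀ k, Summable (T k) := fun k => huncurry.prod_factor k
  have h2s : ∀ n, Summable (fun k => T k n) := fun n => hTS.prod_factor n
  -- rewrite the LHS as a double sum
  have hLHS : ∑' k : ℕ, (Real.Gamma (a1 + k) : ℂ) *
      (∑' n : ℕ, ((coeff k n : ℝ) : ℂ) * z ^ n / (n.factorial : ℂ)) *
      ((t ^ k / k.factorial : ℝ) : ℂ) = ∑' k : ℕ, ∑' n : ℕ, T k n := by
    apply tsum_congr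
    intro k
    rw [← tsum_mul_left, ← tsum_mul_right]
  have hswap : ∑' k : ℕ, ∑' n : ℕ, T k n = ∑' n : ℕ, ∑' k : ℕ, T k n :=
    (Summable.tsum_comm' huncurry h1s h2s).symm
  -- evaluate the inner sum for each n
  have hinner : ∀ n : ℕ, ∑' k : ℕ, T k n
      = ((Real.Gamma a1 : ℂ) * (((1 - t) ^ (-a1) : ℝ) : ℂ)) *
        (((A n : ℝ) : ℂ) * (z / ((1 - t : ℝ) : ℂ)) ^ n / (n.factorial : ℂ)) := by
    intro n
    have hΓn : Real.Gamma (a1 + n) ≠ 0 :=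
      (Real.Gamma_pos_of_pos (show (0:ℝ) < a1 + n by positivity)).ne'
    have hTk : ∀ k : ℕ, T k n = ((Real.Gamma (a1 + n + k) * t ^ k / k.factorial : ℝ) : ℂ) *
        (((Real.Gamma a1 / Real.Gamma (a1 + n) * A n : ℝ) : ℂ) * z ^ n / (n.factorial : ℂ)) := by
      intro k
      rw [hT]
      simp only
      rw [show (Real.Gamma (a1 + k) : ℂ) *
          (((coeff k n : ℝ) : ℂ) * z ^ n / (n.factorial : ℂ)) * ((t ^ k / k.factorial : ℝ) : ℂ)
          = ((Real.Gamma (a1 + k) : ℂ) * ((coeff k n : ℝ) : ℂ))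
            * (z ^ n / (n.factorial : ℂ)) * ((t ^ k / k.factorial : ℝ) : ℂ) from by ring,
        ← Complex.ofReal_mul, hkey k n]
      push_cast
      ring
    rw [tsum_congr hTk, tsum_mul_right, ← Complex.ofReal_tsum, (hrow_t n).tsum_eq]
    have hreal : Real.Gamma (a1 + n) * (1 - t) ^ (-(a1 + (n:ℝ)))
        * (Real.Gamma a1 / Real.Gamma (a1 + n) * A n)
        = Real.Gamma a1 * (1 - t) ^ (-a1) * A n * (((1 - t) ^ n : ℝ))⁻¹ := by
      rw [hsplit _ ht1 n]
      field_simp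
    have h1t : ((1 - t : ℝ) : ℂ) ≠ 0 := by exact_mod_cast ht1.ne'
    calc ((Real.Gamma (a1 + n) * (1 - t) ^ (-(a1 + (n:ℝ))) : ℝ) : ℂ) *
          (((Real.Gamma a1 / Real.Gamma (a1 + n) * A n : ℝ) : ℂ) * z ^ n / (n.factorial : ℂ))
        = ((Real.Gamma (a1 + n) * (1 - t) ^ (-(a1 + (n:ℝ)))
            * (Real.Gamma a1 / Real.Gamma (a1 + n) * A n) : ℝ) : ℂ) * z ^ n
            / (n.factorial : ℂ) := by
          push_cast
          ring
      _ = ((Real.Gamma a1 * (1 - t) ^ (-a1) * A n * (((1 - t) ^ n : ℝ))⁻¹ : ℝ) : ℂ) * z ^ n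
            / (n.factorial : ℂ) := by rw [hreal]
      _ = ((Real.Gamma a1 : ℂ) * (((1 - t) ^ (-a1) : ℝ) : ℂ)) *
          (((A n : ℝ) : ℂ) * (z / ((1 - t : ℝ) : ℂ)) ^ n / (n.factorial : ℂ)) := by
          push_cast
          rw [div_pow]
          ring
  rw [hLHS, hswap, tsum_congr hinner, tsum_mul_left]
end

section
/- Let μ > 1. Then for every real t with |t| < 1, ∑_{k=0}^∞ Γ(μ+k) · (t^k/k!) · ∑_{n=1}^∞ 2 n^k / ((1−t) + n)^{μ+k} = [2 Γ(μ) / (1−t)^μ] · (ζ(μ) − 1), where ζ(s) = ∑_{n=1}^∞ n^{−s} is the Riemann zeta function (and ζ(μ)−1 = ζ(μ,2) in terms of the Hurwitz zeta function ζ(s,a) = ∑_{m=0}^∞ 1/(m+a)^s). -/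
open Filter Topology

namespace MathieuAux

noncomputable def a (μ : ℝ) (k : ℕ) : ℝ := Real.Gamma (μ + k) / k.factorial

lemma a_pos {μ : ℝ} (hμ : 0 < μ) (k : ℕ) : 0 < a μ k :=
  div_pos (Real.Gamma_pos_of_pos (by positivity)) (by positivity)

lemma a_zero (μ : ℝ) : a μ 0 = Real.Gamma μ := by simp [a]

lemma a_succ {μ : ℝ} (hμ : 0 < μ) (k : ℕ) :
    a μ (k + 1) * (k + 1) = a μ k * (μ + k) := by
  have h1 : (μ + ((k : ℕ) + 1 : ℕ) : ℝ) = (μ + k) + 1 := by push_cast; ring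
  have h2 : Real.Gamma ((μ + k) + 1) = (μ + k) * Real.Gamma (μ + k) :=
    Real.Gamma_add_one (by positivity)
  have hk : ((k + 1).factorial : ℝ) = (k + 1) * k.factorial := by
    rw [Nat.factorial_succ]; push_cast; ring
  have hkf : (k.factorial : ℝ) ≠ 0 := by positivity
  rw [a, a, h1, h2, hk]
  field_simp

lemma a_shift {μ : ℝ} (hμ : 0 < μ) (k : ℕ) :
    a μ k * (μ + k) = a (μ + 1) k := by
  have h2 : Real.Gamma ((μ + k) + 1) = (μ + k) * Real.Gamma (μ + k) :=
    Real.Gamma_add_one (by positivity)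
  have h1 : (μ + 1 + (k : ℝ)) = (μ + k) + 1 := by ring
  rw [a, a, h1, h2]
  field_simp

lemma summable_a_mul_pow {μ : ℝ} (hμ : 0 < μ) {r : ℝ} (hr0 : 0 ≤ r) (hr : r < 1) :
    Summable (fun k : ℕ => a μ k * r ^ k) := by
  rcases eq_or_lt_of_le hr0 with h0 | h0
  · apply summable_of_ne_finset_zero (s := {0})
    intro k hk
    simp only [Finset.mem_singleton] at hk
    rw [← h0, zero_pow hk, mul_zero]
  · set ρ : ℝ := (r + 1) / 2 with hρdef
    have hρ1 : ρ < 1 := by rw [hρdef]; linarith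
    have hrρ : r < ρ := by rw [hρdef]; linarith
    apply summable_of_ratio_norm_eventually_le hρ1
    have htend : Tendsto (fun k : ℕ => (μ + k) / ((k : ℝ) + 1)) atTop (𝓝 1) := by
      have heq : (fun k : ℕ => (μ + k) / ((k : ℝ) + 1))
          = fun k : ℕ => (μ - 1) / ((k : ℝ) + 1) + 1 := by
        funext k
        have : ((k : ℝ) + 1) ≠ 0 := by positivity
        field_simp
        ring
      rw [heq]
      have h0' : Tendsto (fun k : ℕ => (μ - 1) / ((k : ℝ) + 1)) atTop (𝓝 0) :=
        Tendsto.div_atTop tendsto_const_nhds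
          (tendsto_atTop_add_const_right _ 1 tendsto_natCast_atTop_atTop)
      simpa using h0'.add_const 1
    have hev : ∀ᶠ k : ℕ in atTop, (μ + k) / ((k : ℝ) + 1) ≤ ρ / r :=
      htend.eventually_le_const ((one_lt_div h0).2 hrρ)
    filter_upwards [hev] with k hk
    have hak := a_pos hμ k
    have hak1 := a_pos hμ (k + 1)
    have hrk : (0:ℝ) < r ^ k := pow_pos h0 k
    rw [Real.norm_eq_abs, Real.norm_eq_abs, abs_of_pos (by positivity),
      abs_of_pos (by positivity)]
    have hrec : a μ (k + 1) = a μ k * (μ + k) / (k + 1) := by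
      have := a_succ hμ k
      field_simp at this ⊢
      linarith [this]
    rw [hrec, pow_succ]
    have h1 : (μ + (k:ℝ)) / ((k:ℝ) + 1) * r ≤ ρ := by
      rw [div_le_div_iff₀ (by positivity) h0] at hk
      rw [div_mul_eq_mul_div, div_le_iff₀ (by positivity)]
      nlinarith [hk]
    calc a μ k * (μ + ↑k) / (↑k + 1) * (r ^ k * r)
        = (a μ k * r ^ k) * ((μ + ↑k) / (↑k + 1) * r) := by ring
      _ ≤ (a μ k * r ^ k) * ρ := by
          apply mul_le_mul_of_nonneg_left h1 (by positivity)
      _ = ρ * (a μ k * r ^ k) := by ring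

lemma summable_f {μ : ℝ} (hμ : 0 < μ) {x : ℝ} (hx : |x| < 1) :
    Summable (fun k : ℕ => a μ k * x ^ k) := by
  apply Summable.of_abs
  have : (fun k : ℕ => |a μ k * x ^ k|) = fun k : ℕ => a μ k * |x| ^ k := by
    funext k
    rw [abs_mul, abs_pow, abs_of_pos (a_pos hμ k)]
  rw [this]
  exact summable_a_mul_pow hμ (abs_nonneg x) hx

lemma hasDerivAt_f {μ : ℝ} (hμ : 0 < μ) {x : ℝ} (hx : |x| < 1) :
    HasDerivAt (fun y : ℝ => ∑' k : ℕ, a μ k * y ^ k)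
      (∑' k : ℕ, a μ k * (k * x ^ (k - 1))) x := by
  set r : ℝ := (|x| + 1) / 2 with hrdef
  have hxr : |x| < r := by rw [hrdef]; linarith
  have hr0 : 0 < r := by positivity
  have hr1 : r < 1 := by rw [hrdef]; linarith
  set u : ℕ → ℝ := fun k => a (μ + 1) k * r ^ k / r with hudef
  have hu : Summable u := (summable_a_mul_pow (by linarith) hr0.le hr1).div_const r
  have hball : x ∈ Metric.ball (0:ℝ) r := by
    simpa [Real.norm_eq_abs] using hxr
  refine hasDerivAt_tsum_of_isPreconnected (y₀ := (0:ℝ)) hu Metric.isOpen_ball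
    (convex_ball (0:ℝ) r).isPreconnected
    (fun k y _ => ((hasDerivAt_pow k y).const_mul (a μ k))) ?_ ?_ ?_ hball
  · intro k y hy
    have hy' : |y| < r := by simpa [Real.norm_eq_abs] using hy
    rw [Real.norm_eq_abs, abs_mul, abs_of_pos (a_pos hμ k), abs_mul, abs_pow,
      Nat.abs_cast]
    rcases Nat.eq_zero_or_pos k with rfl | hk
    · simp only [Nat.cast_zero, zero_mul, mul_zero, hudef, pow_zero, mul_one]
      have := a_pos (show (0:ℝ) < μ + 1 by linarith) 0
      positivity
    · have h1 : |y| ^ (k - 1) ≤ r ^ (k - 1) :=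
        pow_le_pow_left₀ (abs_nonneg y) hy'.le _
      have h2 : a μ k * (↑k * |y| ^ (k - 1)) ≤ a μ k * (↑k * r ^ (k - 1)) := by
        apply mul_le_mul_of_nonneg_left _ (a_pos hμ k).le
        exact mul_le_mul_of_nonneg_left h1 (by positivity)
      refine h2.trans ?_
      have h3 : a μ k * (k : ℝ) ≤ a (μ + 1) k := by
        rw [← a_shift hμ k]
        apply mul_le_mul_of_nonneg_left _ (a_pos hμ k).le
        linarith
      have h4 : r ^ (k - 1) = r ^ k / r := by
        rw [eq_div_iff hr0.ne', ← pow_succ]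
        congr 1
        omega
      rw [hudef]
      simp only []
      rw [h4]
      rw [div_eq_mul_inv, div_eq_mul_inv]
      have : a μ k * (↑k * (r ^ k * r⁻¹)) = (a μ k * ↑k) * r ^ k * r⁻¹ := by ring
      rw [this]
      apply mul_le_mul_of_nonneg_right _ (by positivity)
      exact mul_le_mul_of_nonneg_right h3 (by positivity)
  · exact Metric.mem_ball_self hr0
  · exact summable_f hμ (by norm_num : |(0:ℝ)| < 1)

lemma ode_identity {μ : ℝ} (hμ : 0 < μ) {y : ℝ} (hy : |y| < 1) :
    (1 - y) * (∑' k : ℕ, a μ k * (k * y ^ (k - 1)))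
      = μ * ∑' k : ℕ, a μ k * y ^ k := by
  set g : ℕ → ℝ := fun k => a μ k * (k * y ^ (k - 1)) with hgdef
  have hμ1 : (0:ℝ) < μ + 1 := by linarith
  have hs1 : Summable (fun k : ℕ => a (μ + 1) k * y ^ k) := summable_f hμ1 hy
  have hgs : ∀ k : ℕ, g (k + 1) = a (μ + 1) k * y ^ k := by
    intro k
    have : g (k + 1) = (a μ (k + 1) * ((k : ℝ) + 1)) * y ^ k := by
      simp only [hgdef, Nat.add_sub_cancel]
      push_cast
      ring
    rw [this, a_succ hμ k, a_shift hμ k]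
  have hgsum : Summable g := by
    rw [← summable_nat_add_iff 1]
    exact hs1.congr fun k => (hgs k).symm
  have hD : ∑' k, g k = ∑' k : ℕ, a (μ + 1) k * y ^ k := by
    rw [Summable.tsum_eq_zero_add hgsum]
    simp only [hgdef, Nat.cast_zero, zero_mul, mul_zero, zero_add]
    exact tsum_congr hgs
  have hyg : ∀ k : ℕ, y * g k = a μ k * (k : ℝ) * y ^ k := by
    intro k
    rcases Nat.eq_zero_or_pos k with rfl | hk
    · simp [hgdef]
    · have : y ^ k = y * y ^ (k - 1) := by
        rw [← pow_succ']
        congr 1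
        omega
      rw [hgdef]
      simp only []
      rw [this]
      ring
  have hEsum : Summable (fun k : ℕ => a μ k * (k : ℝ) * y ^ k) :=
    (hgsum.mul_left y).congr hyg
  have hE : ∑' k : ℕ, a μ k * (k : ℝ) * y ^ k = y * ∑' k, g k := by
    rw [← tsum_mul_left]
    exact tsum_congr fun k => (hyg k).symm
  have hsplit : ∑' k : ℕ, a (μ + 1) k * y ^ k
      = μ * (∑' k : ℕ, a μ k * y ^ k) + ∑' k : ℕ, a μ k * (k : ℝ) * y ^ k := by
    have hterm : ∀ k : ℕ, a (μ + 1) k * y ^ k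
        = μ * (a μ k * y ^ k) + a μ k * (k : ℝ) * y ^ k := by
      intro k
      rw [← a_shift hμ k]
      ring
    rw [tsum_congr hterm, Summable.tsum_add ((summable_f hμ hy).mul_left μ) hEsum, tsum_mul_left]
  have := hD
  rw [hsplit, hE] at this
  -- this : ∑' g = μ f + y * ∑' g
  nlinarith [this]

lemma hasSum_binomial {μ : ℝ} (hμ : 0 < μ) {x : ℝ} (hx : |x| < 1) :
    HasSum (fun k : ℕ => a μ k * x ^ k) (Real.Gamma μ * (1 - x) ^ (-μ)) := by
  set f : ℝ → ℝ := fun y => ∑' k : ℕ, a μ k * y ^ k with hfdef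
  set s : Set ℝ := Metric.ball (0:ℝ) 1 with hsdef
  have hmem : ∀ {y : ℝ}, |y| < 1 → y ∈ s := by
    intro y hy
    simpa [hsdef, Real.norm_eq_abs] using hy
  have hφderiv : ∀ y ∈ s, HasDerivAt (fun z => f z * (1 - z) ^ μ) 0 y := by
    intro y hy
    have hy1 : |y| < 1 := by simpa [hsdef, Real.norm_eq_abs] using hy
    have h1y : (0:ℝ) < 1 - y := by
      have := abs_lt.1 hy1
      linarith [this.2]
    have hD := hasDerivAt_f hμ hy1
    have hR : HasDerivAt (fun z : ℝ => (1 - z) ^ μ) (μ * (1 - y) ^ (μ - 1) * (-1)) y := by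
      have hbase : HasDerivAt (fun z : ℝ => 1 - z) (-1) y := by
        simpa using (hasDerivAt_id y).const_sub 1
      have h := hbase.rpow_const (p := μ) (Or.inl h1y.ne')
      convert h using 1
      ring
    have hmul := hD.mul hR
    refine hmul.congr_deriv ?_
    have hpow : (1 - y) ^ μ = (1 - y) ^ (μ - 1) * (1 - y) := by
      have h := Real.rpow_add_one h1y.ne' (μ - 1)
      rw [sub_add_cancel] at h
      exact h
    have hode := ode_identity hμ hy1
    rw [hpow]
    have : (∑' k : ℕ, a μ k * (↑k * y ^ (k - 1))) * ((1 - y) ^ (μ - 1) * (1 - y))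
        + f y * (μ * (1 - y) ^ (μ - 1) * (-1))
        = (1 - y) ^ (μ - 1) * ((1 - y) * (∑' k : ℕ, a μ k * (↑k * y ^ (k - 1))) - μ * f y) := by
      ring
    rw [this, hode]
    simp [hfdef]
  have hconst : ∀ y ∈ s, f y * (1 - y) ^ μ = Real.Gamma μ := by
    intro y hy
    have h0s : (0:ℝ) ∈ s := hmem (by norm_num)
    have := Convex.norm_image_sub_le_of_norm_hasDerivWithin_le (C := 0)
      (f := fun z => f z * (1 - z) ^ μ) (f' := fun _ => 0)
      (fun z hz => (hφderiv z hz).hasDerivWithinAt)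
      (fun z _ => by simp) (convex_ball (0:ℝ) 1) h0s hy
    have hzero : f y * (1 - y) ^ μ = f 0 * (1 - 0) ^ μ := by
      have h0 : ‖f y * (1 - y) ^ μ - f 0 * (1 - 0) ^ μ‖ ≤ 0 := by simpa using this
      have := norm_nonneg (f y * (1 - y) ^ μ - f 0 * (1 - 0) ^ μ)
      have heq : ‖f y * (1 - y) ^ μ - f 0 * (1 - 0) ^ μ‖ = 0 := le_antisymm h0 this
      rw [norm_eq_zero] at heq
      linarith [sub_eq_zero.1 heq]
    rw [hzero]
    have hf0 : f 0 = Real.Gamma μ := by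
      rw [hfdef]
      simp only []
      rw [tsum_eq_single 0]
      · simp [a_zero]
      · intro k hk
        simp [zero_pow hk]
    rw [hf0]
    simp [Real.one_rpow]
  have hx1 : (0:ℝ) < 1 - x := by
    have := abs_lt.1 hx
    linarith [this.2]
  have hval : f x = Real.Gamma μ * (1 - x) ^ (-μ) := by
    have h := hconst x (hmem hx)
    have hpos : (0:ℝ) < (1 - x) ^ μ := Real.rpow_pos_of_pos hx1 μ
    rw [Real.rpow_neg hx1.le]
    field_simp at h ⊢
    linarith [h]
  exact (summable_f hμ hx).hasSum_iff.2 hval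

end MathieuAux

open MathieuAux

/-- `∑_k Γ(μ+k)(tᵏ/k!) ∑_{n≥1} 2nᵏ/((1-t)+n)^{μ+k} = 2Γ(μ)/(1-t)^μ · (ζ(μ)-1)`,
where `ζ(s) = ∑_{n≥1} n^{-s}` is the Riemann zeta function. -/
theorem mathieu_generating_function_at_r_sq_one_sub_t
    (μ : ℝ) (hμ : 1 < μ) (t : ℝ) (ht : |t| < 1) :
    ∑' k : ℕ, Real.Gamma (μ + k) * (t ^ k / k.factorial) *
      ∑' n : ℕ, 2 * ((n : ℝ) + 1) ^ k / ((1 - t) + ((n : ℝ) + 1)) ^ (μ + k)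
    = 2 * Real.Gamma μ / (1 - t) ^ μ *
      ((∑' n : ℕ, 1 / ((n : ℝ) + 1) ^ μ) - 1) := by
  have hμ0 : (0:ℝ) < μ := by linarith
  have hΓ : 0 < Real.Gamma μ := Real.Gamma_pos_of_pos hμ0
  have htlt := abs_lt.1 ht
  have hc : 0 < 1 - t := by linarith [htlt.2]
  have ht1 : 0 < 1 - |t| := by linarith [abs_nonneg t, ht]
  set W : ℕ → ℕ → ℝ := fun n k => Real.Gamma (μ + k) * (t ^ k / k.factorial) *
    (2 * ((n : ℝ) + 1) ^ k / ((1 - t) + ((n : ℝ) + 1)) ^ (μ + k)) with hWdef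
  set x : ℕ → ℝ := fun n => t * ((n : ℝ) + 1) / ((1 - t) + ((n : ℝ) + 1)) with hxdef
  have hm : ∀ n : ℕ, (0:ℝ) < (n : ℝ) + 1 := fun n => by positivity
  have hcm : ∀ n : ℕ, (0:ℝ) < (1 - t) + ((n : ℝ) + 1) := fun n => by
    have := hm n; linarith
  have hxabs : ∀ n : ℕ, |x n| < 1 := by
    intro n
    rw [hxdef]
    simp only []
    rw [abs_div, abs_mul, abs_of_pos (hm n), abs_of_pos (hcm n), div_lt_one (hcm n)]
    calc |t| * ((n:ℝ) + 1) < 1 * ((n:ℝ) + 1) := by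
          exact mul_lt_mul_of_pos_right ht (hm n)
      _ = (n:ℝ) + 1 := one_mul _
      _ < (1 - t) + ((n:ℝ) + 1) := by linarith
  -- rewrite W in binomial form
  have hW : ∀ n k, W n k = (2 / ((1 - t) + ((n : ℝ) + 1)) ^ μ) * (a μ k * (x n) ^ k) := by
    intro n k
    have hsplit : ((1 - t) + ((n : ℝ) + 1)) ^ (μ + (k:ℝ))
        = ((1 - t) + ((n : ℝ) + 1)) ^ μ * ((1 - t) + ((n : ℝ) + 1)) ^ (k:ℕ) := by
      rw [Real.rpow_add (hcm n), Real.rpow_natCast]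
    have hxpow : (x n) ^ k = t ^ k * ((n:ℝ) + 1) ^ k / ((1 - t) + ((n : ℝ) + 1)) ^ (k:ℕ) := by
      rw [hxdef]
      simp only []
      rw [div_pow, mul_pow]
    rw [hWdef]
    simp only []
    rw [hsplit, hxpow, a]
    have h1 : ((1 - t) + ((n : ℝ) + 1)) ^ μ ≠ 0 := by
      exact (Real.rpow_pos_of_pos (hcm n) μ).ne'
    have h2 : (((1 - t) + ((n : ℝ) + 1)) ^ (k:ℕ) : ℝ) ≠ 0 := by positivity
    have h3 : (k.factorial : ℝ) ≠ 0 := by positivity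
    field_simp
  -- per-n abs HasSum
  have habsW : ∀ n k, |W n k| = (2 / ((1 - t) + ((n : ℝ) + 1)) ^ μ) * (a μ k * |x n| ^ k) := by
    intro n k
    rw [hW n k, abs_mul, abs_mul, abs_pow,
      abs_of_pos (by positivity : (0:ℝ) < 2 / ((1 - t) + ((n : ℝ) + 1)) ^ μ),
      abs_of_pos (a_pos hμ0 k)]
  have hbinabs : ∀ n : ℕ, HasSum (fun k => |W n k|)
      ((2 / ((1 - t) + ((n : ℝ) + 1)) ^ μ) * (Real.Gamma μ * (1 - |x n|) ^ (-μ))) := by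
    intro n
    have hb := hasSum_binomial hμ0 (x := |x n|) (by rw [abs_abs]; exact hxabs n)
    have := hb.mul_left (2 / ((1 - t) + ((n : ℝ) + 1)) ^ μ)
    exact this.congr_fun (habsW n)
  -- the p-series
  have hZsum : Summable (fun n : ℕ => 1 / ((n : ℝ) + 1) ^ μ) := by
    have h0 : Summable (fun n : ℕ => 1 / (n : ℝ) ^ μ) := Real.summable_one_div_nat_rpow.2 hμ
    have h1 : Summable (fun n : ℕ => 1 / ((n + 1 : ℕ) : ℝ) ^ μ) := (summable_nat_add_iff (f := fun n : ℕ => 1 / (n : ℝ) ^ μ) 1).2 h0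
    exact h1.congr fun n => by push_cast; rfl
  -- bound for the abs sums
  have hbound : ∀ n : ℕ, (2 / ((1 - t) + ((n : ℝ) + 1)) ^ μ) * (Real.Gamma μ * (1 - |x n|) ^ (-μ))
      ≤ (2 * Real.Gamma μ / (1 - |t|) ^ μ) * (1 / ((n : ℝ) + 1) ^ μ) := by
    intro n
    have hA := hcm n
    have hmn := hm n
    have h1x : 1 - |x n| = ((1 - t) + ((n:ℝ)+1) - |t| * ((n:ℝ)+1)) / ((1 - t) + ((n:ℝ)+1)) := by
      rw [hxdef]
      simp only []
      rw [abs_div, abs_mul, abs_of_pos hmn, abs_of_pos hA]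
      field_simp
    have hnum_pos : 0 < (1 - t) + ((n:ℝ)+1) - |t| * ((n:ℝ)+1) := by
      nlinarith [abs_nonneg t, ht, hmn]
    have hge : (1 - |t|) * ((n:ℝ)+1) ≤ (1 - t) + ((n:ℝ)+1) - |t| * ((n:ℝ)+1) := by
      nlinarith [le_abs_self t]
    have hS : (2 / ((1 - t) + ((n:ℝ)+1)) ^ μ) * (Real.Gamma μ * (1 - |x n|) ^ (-μ))
        = 2 * Real.Gamma μ / ((1 - t) + ((n:ℝ)+1) - |t| * ((n:ℝ)+1)) ^ μ := by
      rw [h1x, Real.rpow_neg (by positivity), Real.div_rpow hnum_pos.le hA.le, inv_div]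
      have hAμ : (0:ℝ) < ((1 - t) + ((n:ℝ)+1)) ^ μ := Real.rpow_pos_of_pos hA μ
      have hNμ : (0:ℝ) < ((1 - t) + ((n:ℝ)+1) - |t| * ((n:ℝ)+1)) ^ μ :=
        Real.rpow_pos_of_pos hnum_pos μ
      field_simp
    rw [hS]
    have hNle : ((1 - |t|) * ((n:ℝ)+1)) ^ μ
        ≤ ((1 - t) + ((n:ℝ)+1) - |t| * ((n:ℝ)+1)) ^ μ :=
      Real.rpow_le_rpow (by positivity) hge hμ0.le
    have hmul : ((1 - |t|) * ((n:ℝ)+1)) ^ μ = (1 - |t|) ^ μ * ((n:ℝ)+1) ^ μ :=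
      Real.mul_rpow ht1.le hmn.le
    have hNμ : (0:ℝ) < ((1 - t) + ((n:ℝ)+1) - |t| * ((n:ℝ)+1)) ^ μ :=
      Real.rpow_pos_of_pos hnum_pos μ
    have htμ : (0:ℝ) < (1 - |t|) ^ μ := Real.rpow_pos_of_pos ht1 μ
    have hmμ : (0:ℝ) < ((n:ℝ)+1) ^ μ := Real.rpow_pos_of_pos hmn μ
    have key : 2 * Real.Gamma μ / ((1 - t) + ((n:ℝ)+1) - |t| * ((n:ℝ)+1)) ^ μ
        ≤ 2 * Real.Gamma μ / ((1 - |t|) ^ μ * ((n:ℝ)+1) ^ μ) := by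
      apply div_le_div_of_nonneg_left (mul_nonneg (by norm_num) hΓ.le) (mul_pos htμ hmμ)
      rw [← hmul]
      exact hNle
    have hrw : (2 * Real.Gamma μ / (1 - |t|) ^ μ) * (1 / ((n:ℝ)+1) ^ μ)
        = 2 * Real.Gamma μ / ((1 - |t|) ^ μ * ((n:ℝ)+1) ^ μ) := by
      rw [div_mul_div_comm, mul_one]
    rw [hrw]
    exact key
  -- summability of the abs column sums
  have hSsummable : Summable (fun n : ℕ => ∑' k : ℕ, |W n k|) := by
    refine Summable.of_nonneg_of_le (fun n => tsum_nonneg fun k => abs_nonneg _)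
      (fun n => ?_) (hZsum.mul_left (2 * Real.Gamma μ / (1 - |t|) ^ μ))
    rw [(hbinabs n).tsum_eq]
    exact hbound n
  have habs_prod : Summable (fun p : ℕ × ℕ => |W p.1 p.2|) := by
    apply (summable_prod_of_nonneg (fun p => abs_nonneg _)).2
    exact ⟨fun n => (hbinabs n).summable, hSsummable⟩
  have hprod : Summable (Function.uncurry W) := Summable.of_abs habs_prod
  -- per-n value of the k-sum
  have hWsum : ∀ n : ℕ, HasSum (fun k => W n k)
      ((2 / ((1 - t) + ((n:ℝ)+1)) ^ μ) * (Real.Gamma μ * (1 - x n) ^ (-μ))) := by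
    intro n
    have hb := hasSum_binomial hμ0 (hxabs n)
    exact (hb.mul_left (2 / ((1 - t) + ((n:ℝ)+1)) ^ μ)).congr_fun (hW n)
  have hVval : ∀ n : ℕ, (2 / ((1 - t) + ((n:ℝ)+1)) ^ μ) * (Real.Gamma μ * (1 - x n) ^ (-μ))
      = (2 * Real.Gamma μ / (1 - t) ^ μ) * (1 / ((n:ℝ) + 2) ^ μ) := by
    intro n
    have hA := hcm n
    have h1x : 1 - x n = ((1 - t) * ((n:ℝ) + 2)) / ((1 - t) + ((n:ℝ)+1)) := by
      rw [hxdef]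
      simp only []
      field_simp
      ring
    have hB : (0:ℝ) < (1 - t) * ((n:ℝ) + 2) := mul_pos hc (by positivity)
    rw [h1x, Real.rpow_neg (by positivity), Real.div_rpow hB.le hA.le, inv_div]
    have hAμ : (0:ℝ) < ((1 - t) + ((n:ℝ)+1)) ^ μ := Real.rpow_pos_of_pos hA μ
    have hBμ : (0:ℝ) < ((1 - t) * ((n:ℝ)+2)) ^ μ := Real.rpow_pos_of_pos hB μ
    have hmulB : ((1 - t) * ((n:ℝ)+2)) ^ μ = (1 - t) ^ μ * ((n:ℝ)+2) ^ μ :=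
      Real.mul_rpow hc.le (by positivity)
    have htμ : (0:ℝ) < (1 - t) ^ μ := Real.rpow_pos_of_pos hc μ
    have hmμ : (0:ℝ) < ((n:ℝ)+2) ^ μ := Real.rpow_pos_of_pos (by positivity) μ
    rw [hmulB]
    field_simp
  -- the shifted zeta sum
  have hZvals : ∑' n : ℕ, 1 / ((n:ℝ) + 2) ^ μ = (∑' n : ℕ, 1 / ((n : ℝ) + 1) ^ μ) - 1 := by
    have h := Summable.tsum_eq_zero_add hZsum
    rw [h]
    have hZ0 : 1 / (((0:ℕ):ℝ) + 1) ^ μ = 1 := by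
      norm_num
    rw [hZ0]
    have hZs : ∀ n : ℕ, 1 / (((n + 1 : ℕ) : ℝ) + 1) ^ μ = 1 / ((n:ℝ) + 2) ^ μ := by
      intro n
      push_cast
      ring_nf
    rw [tsum_congr hZs]
    ring
  -- final computation
  calc ∑' k : ℕ, Real.Gamma (μ + k) * (t ^ k / k.factorial) *
        ∑' n : ℕ, 2 * ((n : ℝ) + 1) ^ k / ((1 - t) + ((n : ℝ) + 1)) ^ (μ + k)
      = ∑' k : ℕ, ∑' n : ℕ, W n k := by
        apply tsum_congr
        intro k
        exact (tsum_mul_left).symm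
    _ = ∑' n : ℕ, ∑' k : ℕ, W n k := Summable.tsum_comm hprod
    _ = ∑' n : ℕ, (2 * Real.Gamma μ / (1 - t) ^ μ) * (1 / ((n:ℝ) + 2) ^ μ) := by
        apply tsum_congr
        intro n
        rw [(hWsum n).tsum_eq, hVval n]
    _ = (2 * Real.Gamma μ / (1 - t) ^ μ) * ∑' n : ℕ, 1 / ((n:ℝ) + 2) ^ μ := tsum_mul_left
    _ = 2 * Real.Gamma μ / (1 - t) ^ μ * ((∑' n : ℕ, 1 / ((n : ℝ) + 1) ^ μ) - 1) := by
        rw [hZvals]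
end

section
/- For every real m ≥ 2, ∑_{k=0}^∞ ∑_{n=1}^∞ [(k+1)(k+2)(k+3)/(1+mn)⁴] · ((m−1)n/(1+mn))^k = 6(ζ(4) − 1) = (π⁴ − 90)/15, where ζ(s) = ∑_{n=1}^∞ n^{−s} is the Riemann zeta function. -/
open Nat

private lemma cast_choose_three (k : ℕ) :
    (((k + 3).choose 3 : ℕ) : ℝ) = ((k : ℝ) + 1) * ((k : ℝ) + 2) * ((k : ℝ) + 3) / 6 := by
  have h : (k + 3)! = (k + 3) * ((k + 2) * ((k + 1) * k !)) := by
    simp [show k + 3 = (k + 2) + 1 from rfl, show k + 2 = (k + 1) + 1 from rfl,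
      Nat.factorial_succ]
  rw [Nat.cast_choose ℝ (by omega : 3 ≤ k + 3), show k + 3 - 3 = k from by omega, h]
  have hk : (k ! : ℝ) ≠ 0 := by exact_mod_cast k.factorial_ne_zero
  push_cast
  rw [show ((3 : ℕ)! : ℝ) = 6 from by norm_num [Nat.factorial]]
  field_simp

private lemma zeta4_shift : HasSum (fun n : ℕ => 1 / ((n : ℝ) + 1) ^ 4) (Real.pi ^ 4 / 90) := by
  have h := (hasSum_nat_add_iff' (f := fun n : ℕ => (1 : ℝ) / (n : ℝ) ^ 4) 1).mpr hasSum_zeta_four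
  simpa using h

private lemma zeta4_shift2 :
    HasSum (fun n : ℕ => 1 / ((n : ℝ) + 2) ^ 4) (Real.pi ^ 4 / 90 - 1) := by
  have h := (hasSum_nat_add_iff' (f := fun n : ℕ => (1 : ℝ) / ((n : ℝ) + 1) ^ 4) 1).mpr zeta4_shift
  have he : (fun n : ℕ => (1 : ℝ) / ((n : ℝ) + 2) ^ 4)
      = fun n : ℕ => (1 : ℝ) / (((n + 1 : ℕ) : ℝ) + 1) ^ 4 := by
    funext n; push_cast; ring_nf
  rw [he]
  convert h using 1
  · rfl
  · norm_num

/-- `∑_{k≥0} ∑_{n≥1} (k+1)(k+2)(k+3)/(1+mn)⁴ ((m-1)n/(1+mn))ᵏ = 6(ζ(4)-1) = (π⁴-90)/15`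
for every real `m ≥ 2`, where `ζ(s) = ∑_{n≥1} n^{-s}`. -/
theorem double_series_identity_zeta_four
    (m : ℝ) (hm : 2 ≤ m) :
    (∑' k : ℕ, ∑' n : ℕ,
        ((k : ℝ) + 1) * ((k : ℝ) + 2) * ((k : ℝ) + 3) / (1 + m * ((n : ℝ) + 1)) ^ 4 *
          ((m - 1) * ((n : ℝ) + 1) / (1 + m * ((n : ℝ) + 1))) ^ k
      = 6 * ((∑' n : ℕ, 1 / ((n : ℝ) + 1) ^ 4) - 1)) ∧
    (6 * ((∑' n : ℕ, 1 / ((n : ℝ) + 1) ^ 4) - 1) = (Real.pi ^ 4 - 90) / 15) := by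
  set f : ℕ → ℕ → ℝ := fun k n =>
    ((k : ℝ) + 1) * ((k : ℝ) + 2) * ((k : ℝ) + 3) / (1 + m * ((n : ℝ) + 1)) ^ 4 *
      ((m - 1) * ((n : ℝ) + 1) / (1 + m * ((n : ℝ) + 1))) ^ k with hf
  -- inner sums over k
  have key : ∀ n : ℕ, HasSum (fun k => f k n) (6 / ((n : ℝ) + 2) ^ 4) := by
    intro n
    have hn0 : (0 : ℝ) ≤ (n : ℝ) := Nat.cast_nonneg n
    have hy : (0 : ℝ) < 1 + m * ((n : ℝ) + 1) := by nlinarith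
    set x : ℝ := (m - 1) * ((n : ℝ) + 1) / (1 + m * ((n : ℝ) + 1)) with hx
    have hx0 : 0 ≤ x := by
      apply div_nonneg _ hy.le
      nlinarith
    have hx1 : x < 1 := by
      rw [hx, div_lt_one hy]
      nlinarith
    have hnorm : ‖x‖ < 1 := by rw [Real.norm_eq_abs, abs_of_nonneg hx0]; exact hx1
    have H := (hasSum_choose_mul_geometric_of_norm_lt_one 3 hnorm).mul_left
      (6 / (1 + m * ((n : ℝ) + 1)) ^ 4)
    have h1x : 1 - x = ((n : ℝ) + 2) / (1 + m * ((n : ℝ) + 1)) := by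
      rw [hx]
      field_simp
      ring
    have hterm : (fun k => f k n)
        = fun k => 6 / (1 + m * ((n : ℝ) + 1)) ^ 4 * ((((k + 3).choose 3 : ℕ) : ℝ) * x ^ k) := by
      funext k
      rw [hf, cast_choose_three]
      ring
    have hval : 6 / (1 + m * ((n : ℝ) + 1)) ^ 4 * (1 / (1 - x) ^ (3 + 1))
        = 6 / ((n : ℝ) + 2) ^ 4 := by
      rw [h1x, div_pow]
      have h2 : (0 : ℝ) < (n : ℝ) + 2 := by positivity
      field_simp
      ring
    rw [hterm]
    exact hval ▸ H
  have hfnn : ∀ k n, 0 ≤ f k n := by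
    intro k n
    have hn0 : (0 : ℝ) ≤ (n : ℝ) := Nat.cast_nonneg n
    apply mul_nonneg
    · apply div_nonneg
      · positivity
      · positivity
    · apply pow_nonneg
      apply div_nonneg
      · nlinarith
      · nlinarith
  -- summability of the column sums
  have hg : Summable (fun n : ℕ => 6 / ((n : ℝ) + 2) ^ 4) := zeta4_shift2.summable.mul_left 6 |>.congr
    (fun n => by rw [mul_one_div])
  -- total summability
  have hF : Summable (Function.uncurry fun n k => f k n) := by
    apply (summable_prod_of_nonneg (fun p => hfnn p.2 p.1)).mpr
    refine ⟨fun n => (key n).summable, ?_⟩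
    apply hg.congr
    intro n
    exact ((key n).tsum_eq).symm
  have hswap : (∑' k : ℕ, ∑' n : ℕ, f k n) = ∑' n : ℕ, ∑' k : ℕ, f k n := Summable.tsum_comm hF
  -- value of the zeta-like sum
  have hS : (∑' n : ℕ, 1 / ((n : ℝ) + 1) ^ 4) = Real.pi ^ 4 / 90 := zeta4_shift.tsum_eq
  have hsum : (∑' n : ℕ, 6 / ((n : ℝ) + 2) ^ 4) = 6 * (Real.pi ^ 4 / 90 - 1) := by
    have h := (zeta4_shift2.mul_left 6).tsum_eq
    simpa [mul_one_div, div_eq_mul_inv] using h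
  constructor
  · rw [hswap]
    have heq : (∑' n : ℕ, ∑' k : ℕ, f k n) = ∑' n : ℕ, 6 / ((n : ℝ) + 2) ^ 4 :=
      tsum_congr fun n => (key n).tsum_eq
    rw [heq, hsum, hS]
  · rw [hS]; ring
end
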